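/- arXiv:2011.04809 — 6 statements merged into one kernel-verified Lean document; each statement's English description precedes it below -/
import Mathlib

section
/- Fix an integer k ≥ 3 and a real r > 0, and set m = ⌈rn⌉ and q = 1 − 2^{1−k}. Let X be the number of 2-colorings of H_k(n,m). Then there exists a constant A > 0 (depending only on k and r) such that for all sufficiently large n, E[X] ≥ A · (2 q^r)^n. -/
open Filter Real

/-- `c` is a proper 2-coloring of the multi-hypergraph with edge tuple `E`:
no edge is monochromatic. -/
def ProperColoring {n k m : ℕ} (E : Fin m → {s : Finset (Fin n) // s.card = k})
    (c : Fin n → Bool) : Prop :=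
  ∀ i : Fin m, ∃ u ∈ (E i).1, ∃ v ∈ (E i).1, c u ≠ c v

/-- The expected number of 2-colorings of the random `k`-uniform hypergraph `H_k(n,m)`
whose `m` edges are chosen uniformly, independently and with replacement from all
`C(n,k)` possible `k`-subsets of `{1,…,n}`. -/
noncomputable def expNumColorings (k n m : ℕ) : ℝ :=
  (∑ E : Fin m → {s : Finset (Fin n) // s.card = k},
      (Nat.card {c : Fin n → Bool // ProperColoring E c} : ℝ)) / ((n.choose k : ℝ) ^ m)

section AuxFirstMoment
open Finset

lemma cyl_count {n : ℕ} (s : Finset (Fin n)) (b : Bool) :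
    #(univ.filter (fun c : Fin n → Bool => ∀ u ∈ s, c u = b)) = 2 ^ (n - s.card) := by
  classical
  have hset : (univ.filter (fun c : Fin n → Bool => ∀ u ∈ s, c u = b)) =
      Fintype.piFinset (fun u => if u ∈ s then ({b} : Finset Bool) else Finset.univ) := by
    ext c
    simp only [mem_filter, mem_univ, true_and, Fintype.mem_piFinset]
    constructor
    · intro h u; by_cases hu : u ∈ s <;> simp [hu, h u]
    · intro h u hu; have := h u; simpa [hu] using this
  rw [hset, Fintype.card_piFinset]
  have : ∀ u : Fin n, #(if u ∈ s then ({b} : Finset Bool) else Finset.univ)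
      = if u ∈ s then 1 else 2 := by
    intro u; by_cases hu : u ∈ s <;> simp [hu]
  simp_rw [this]
  rw [← Finset.prod_sdiff (Finset.subset_univ s)]
  rw [Finset.prod_ite_of_false (by intro u hu; exact (Finset.mem_sdiff.1 hu).2),
      Finset.prod_ite_of_true (by intro u hu; exact hu)]
  simp [Finset.card_sdiff_of_subset (Finset.subset_univ s)]

lemma mono_count {n : ℕ} (s : Finset (Fin n)) (hs : s.Nonempty) :
    #(univ.filter (fun c : Fin n → Bool => ∀ u ∈ s, ∀ v ∈ s, c u = c v))
      = 2 ^ (n - s.card + 1) := by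
  classical
  obtain ⟨u0, hu0⟩ := hs
  have hset : (univ.filter (fun c : Fin n → Bool => ∀ u ∈ s, ∀ v ∈ s, c u = c v))
      = univ.filter (fun c : Fin n → Bool => ∀ u ∈ s, c u = true)
        ∪ univ.filter (fun c : Fin n → Bool => ∀ u ∈ s, c u = false) := by
    ext c
    simp only [mem_filter, mem_union, mem_univ, true_and]
    constructor
    · intro h
      cases hc : c u0
      · right; intro u hu; rw [h u hu u0 hu0, hc]
      · left; intro u hu; rw [h u hu u0 hu0, hc]
    · rintro (h | h) u hu v hv <;> rw [h u hu, h v hv]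
  have hdisj : Disjoint (univ.filter (fun c : Fin n → Bool => ∀ u ∈ s, c u = true))
      (univ.filter (fun c : Fin n → Bool => ∀ u ∈ s, c u = false)) := by
    rw [Finset.disjoint_left]
    intro c h1 h2
    have ht := (mem_filter.1 h1).2 u0 hu0
    have hf := (mem_filter.1 h2).2 u0 hu0
    rw [ht] at hf; simp at hf
  rw [hset, card_union_of_disjoint hdisj, cyl_count, cyl_count, pow_succ]
  ring

lemma key_count {n k : ℕ} (hk : 1 ≤ k) (s : {s : Finset (Fin n) // s.card = k}) :
    (∑ c : Fin n → Bool, if ¬ ∃ u ∈ s.1, ∃ v ∈ s.1, c u ≠ c v then 1 else 0)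
      = 2 ^ (n - k + 1) := by
  classical
  obtain ⟨t, ht⟩ := s
  have h1 : (∑ c : Fin n → Bool, if ¬ ∃ u ∈ t, ∃ v ∈ t, c u ≠ c v then 1 else 0)
      = #(univ.filter (fun c : Fin n → Bool => ∀ u ∈ t, ∀ v ∈ t, c u = c v)) := by
    rw [Finset.card_filter]
    refine Finset.sum_congr rfl fun c _ => ?_
    congr 1
    refine propext ⟨?_, ?_⟩
    · intro h u hu v hv
      by_contra hne
      exact h ⟨u, hu, v, hv, hne⟩
    · rintro h ⟨u, hu, v, hv, hne⟩
      exact hne (h u hu v hv)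
  have hne : t.Nonempty := Finset.card_pos.mp (ht ▸ hk)
  rw [h1, mono_count t hne, ht]

lemma sum_mono {n k : ℕ} (hk : 1 ≤ k) :
    ∑ c : Fin n → Bool, #(univ.filter (fun s : {s : Finset (Fin n) // s.card = k} =>
        ¬ ∃ u ∈ s.1, ∃ v ∈ s.1, c u ≠ c v)) = n.choose k * 2 ^ (n - k + 1) := by
  classical
  simp_rw [Finset.card_filter]
  rw [Finset.sum_comm]
  simp_rw [key_count hk]
  rw [Finset.sum_const, Finset.card_univ, Fintype.card_finset_len, smul_eq_mul, Fintype.card_fin]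

lemma sum_good {n k : ℕ} (hk : 1 ≤ k) :
    ∑ c : Fin n → Bool, #(univ.filter (fun s : {s : Finset (Fin n) // s.card = k} =>
        ∃ u ∈ s.1, ∃ v ∈ s.1, c u ≠ c v)) + n.choose k * 2 ^ (n - k + 1)
      = 2 ^ n * n.choose k := by
  classical
  rw [← sum_mono (n := n) hk, ← Finset.sum_add_distrib]
  have : ∀ c : Fin n → Bool,
      #(univ.filter (fun s : {s : Finset (Fin n) // s.card = k} =>
        ∃ u ∈ s.1, ∃ v ∈ s.1, c u ≠ c v))
      + #(univ.filter (fun s : {s : Finset (Fin n) // s.card = k} =>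
        ¬ ∃ u ∈ s.1, ∃ v ∈ s.1, c u ≠ c v)) = n.choose k := by
    intro c
    rw [Finset.card_filter_add_card_filter_not, Finset.card_univ,
      Fintype.card_finset_len, Fintype.card_fin]
  simp_rw [this]
  rw [Finset.sum_const, Finset.card_univ, smul_eq_mul]
  simp [Fintype.card_fun]

lemma sum_colorings {n k : ℕ} (m : ℕ) :
    ∑ E : Fin m → {s : Finset (Fin n) // s.card = k},
      Nat.card {c : Fin n → Bool // ProperColoring E c} =
    ∑ c : Fin n → Bool, #(univ.filter (fun s : {s : Finset (Fin n) // s.card = k} =>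
        ∃ u ∈ s.1, ∃ v ∈ s.1, c u ≠ c v)) ^ m := by
  classical
  have h1 : ∀ E : Fin m → {s : Finset (Fin n) // s.card = k},
      Nat.card {c : Fin n → Bool // ProperColoring E c}
        = ∑ c : Fin n → Bool, if ProperColoring E c then 1 else 0 := by
    intro E
    rw [Nat.card_eq_fintype_card, Fintype.card_subtype, Finset.card_filter]
  simp_rw [h1]
  rw [Finset.sum_comm]
  refine Finset.sum_congr rfl fun c _ => ?_
  have h2 : (∑ E : Fin m → {s : Finset (Fin n) // s.card = k},
        if ProperColoring E c then 1 else 0)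
      = #(univ.filter (fun E : Fin m → {s : Finset (Fin n) // s.card = k} =>
          ProperColoring E c)) := (Finset.card_filter _ _).symm
  have h3 : (univ.filter (fun E : Fin m → {s : Finset (Fin n) // s.card = k} =>
        ProperColoring E c))
      = Fintype.piFinset (fun _ : Fin m => univ.filter
          (fun s : {s : Finset (Fin n) // s.card = k} => ∃ u ∈ s.1, ∃ v ∈ s.1, c u ≠ c v)) := by
    ext E
    rw [Finset.mem_filter, Fintype.mem_piFinset]
    simp [ProperColoring, Fintype.mem_piFinset]
  rw [h2, h3, Fintype.card_piFinset, Finset.prod_const, Finset.card_univ, Fintype.card_fin]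

lemma main_bound {k n : ℕ} (hk3 : 3 ≤ k) (hkn : k ≤ n) (m' : ℕ) :
    (2:ℝ)^n * (1 - (2:ℝ)^(1-(k:ℝ)))^(m'+1) ≤ expNumColorings k n (m'+1) := by
  classical
  set q : ℝ := 1 - (2:ℝ)^(1-(k:ℝ)) with hqdef
  set G : (Fin n → Bool) → ℕ := fun c => #(univ.filter
      (fun s : {s : Finset (Fin n) // s.card = k} => ∃ u ∈ s.1, ∃ v ∈ s.1, c u ≠ c v)) with hG
  have hN : 0 < (n.choose k : ℝ) := by exact_mod_cast Nat.choose_pos hkn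
  have hexp : ((2:ℝ))^(n-k+1 : ℕ) = 2^n * (2:ℝ)^(1-(k:ℝ)) := by
    rw [← Real.rpow_natCast 2 (n-k+1), ← Real.rpow_natCast 2 n, ← Real.rpow_add two_pos]
    congr 1
    have : ((n - k + 1 : ℕ) : ℝ) = (n:ℝ) - k + 1 := by
      push_cast [hkn]
      ring
    rw [this]; ring
  have hsumG : (∑ c : Fin n → Bool, (G c : ℝ)) = 2^n * q * n.choose k := by
    have h := sum_good (n := n) (k := k) (by omega)
    have hcast : (∑ c : Fin n → Bool, (G c:ℝ)) + (n.choose k : ℝ) * 2^(n-k+1 : ℕ)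
        = 2^n * n.choose k := by exact_mod_cast congrArg (Nat.cast (R := ℝ)) h
    rw [hexp] at hcast
    rw [hqdef]
    linear_combination hcast
  have hG0 : ∀ c ∈ (univ : Finset (Fin n → Bool)), (0:ℝ) ≤ G c := fun c _ => Nat.cast_nonneg _
  have hJ := pow_sum_div_card_le_sum_pow (s := univ) (f := fun c => (G c : ℝ)) hG0 m'
  have hcard : (#(univ : Finset (Fin n → Bool)) : ℝ) = 2^n := by
    rw [Finset.card_univ]
    simp
  have hE : expNumColorings k n (m'+1)
      = (∑ c : Fin n → Bool, (G c : ℝ)^(m'+1)) / (n.choose k : ℝ)^(m'+1) := by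
    rw [expNumColorings]
    congr 1
    exact_mod_cast congrArg (Nat.cast (R := ℝ)) (sum_colorings (n := n) (k := k) (m'+1))
  rw [hE, le_div_iff₀ (pow_pos hN _)]
  have h2n : (0:ℝ) < (2:ℝ)^n := by positivity
  have hstep : ∀ a b c : ℝ, 0 < a → a * b^(m'+1) * c^(m'+1) = (a*b*c)^(m'+1) / a^m' := by
    intro a b c ha
    rw [eq_div_iff (by positivity)]
    ring
  calc (2:ℝ)^n * q^(m'+1) * (n.choose k:ℝ)^(m'+1)
      = (2^n * q * (n.choose k:ℝ))^(m'+1) / ((2:ℝ)^n)^m' := hstep _ _ _ h2n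
    _ = (∑ c : Fin n → Bool, (G c:ℝ))^(m'+1) / (#(univ : Finset (Fin n → Bool)):ℝ)^m' := by
        rw [hsumG, hcard]
    _ ≤ ∑ c : Fin n → Bool, (G c:ℝ)^(m'+1) := hJ


end AuxFirstMoment

/-- First moment lower bound: for k ≥ 3 and r > 0, with q = 1 − 2^{1−k} and X the number
of 2-colorings of H_k(n, ⌈rn⌉), there is a constant A > 0 such that for all sufficiently
large n, E[X] ≥ A (2 q^r)^n. -/
theorem first_moment_lower_bound (k : ℕ) (hk : 3 ≤ k) (r : ℝ) (hr : 0 < r) :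
    ∃ A > (0 : ℝ), ∀ᶠ n : ℕ in atTop,
      A * (2 * (1 - (2 : ℝ) ^ (1 - (k : ℝ))) ^ r) ^ n ≤ expNumColorings k n ⌈r * n⌉₊ := by
  set q : ℝ := 1 - (2:ℝ)^(1-(k:ℝ)) with hqdef
  have h2k : (2:ℝ) ^ (1 - (k:ℝ)) ≤ 1/4 := by
    have hk3 : (3:ℝ) ≤ k := by exact_mod_cast hk
    calc (2:ℝ) ^ (1 - (k:ℝ)) ≤ 2 ^ (-2:ℝ) :=
          Real.rpow_le_rpow_of_exponent_le one_le_two (by linarith)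
      _ = 1/4 := by
          rw [show (-2:ℝ) = ((-2:ℤ):ℝ) by norm_num, Real.rpow_intCast]
          norm_num
  have hpow_pos : 0 < (2:ℝ)^(1-(k:ℝ)) := Real.rpow_pos_of_pos two_pos _
  have hq0 : 0 < q := by rw [hqdef]; linarith
  have hq1 : q < 1 := by rw [hqdef]; linarith
  refine ⟨q, hq0, ?_⟩
  filter_upwards [eventually_ge_atTop k] with n hkn
  have hn1 : 1 ≤ n := by omega
  have hrn : 0 < r * n := by
    have : (1:ℝ) ≤ n := by exact_mod_cast hn1
    positivity
  have hm1 : 1 ≤ ⌈r * (n:ℝ)⌉₊ := Nat.one_le_iff_ne_zero.mpr (by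
    simp only [ne_eq, Nat.ceil_eq_zero, not_le]
    exact hrn)
  have hmb := main_bound (k := k) (n := n) hk hkn (⌈r * (n:ℝ)⌉₊ - 1)
  rw [show ⌈r * (n:ℝ)⌉₊ - 1 + 1 = ⌈r * (n:ℝ)⌉₊ by omega] at hmb
  refine le_trans ?_ hmb
  -- q * (2 * q^r)^n ≤ 2^n * q^m
  have hqr : (2 * q^r)^n = 2^n * (q ^ (r * n)) := by
    rw [mul_pow]
    congr 1
    rw [← Real.rpow_natCast (q^r) n, ← Real.rpow_mul hq0.le]
  have hle : q ^ (r * (n:ℝ) + 1) ≤ q ^ ((⌈r * (n:ℝ)⌉₊ : ℕ) : ℝ) := by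
    apply Real.rpow_le_rpow_of_exponent_ge hq0 hq1.le
    exact (Nat.ceil_lt_add_one hrn.le).le
  rw [Real.rpow_natCast] at hle
  rw [hqr]
  calc q * (2^n * q ^ (r * (n:ℝ)))
      = 2^n * q ^ (r * (n:ℝ) + 1) := by
        rw [Real.rpow_add hq0]
        rw [Real.rpow_one]
        ring
    _ ≤ 2^n * q ^ ⌈r * (n:ℝ)⌉₊ := by
        have h2n : (0:ℝ) ≤ (2:ℝ)^n := by positivity
        exact mul_le_mul_of_nonneg_left hle h2n
end

section
/- Fix integers k ≥ 3, n ≥ k, and m ≥ 1, and let X be the number of 2-colorings of H_k(n,m). Then E[X²] equals the sum, over all quadruples of non-negative integers (z₁,z₂,z₃,z₄) with z₁+z₂+z₃+z₄ = n, of the multinomial coefficient n!/(z₁! z₂! z₃! z₄!) times (1 − (C(z₁+z₂,k) + C(z₃+z₄,k) + C(z₁+z₃,k) + C(z₂+z₄,k) − C(z₁,k) − C(z₂,k) − C(z₃,k) − C(z₄,k)) / C(n,k))^m. -/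
open Filter Real

/-- The expected value of the square of the number of 2-colorings of the random
`k`-uniform hypergraph `H_k(n,m)` whose `m` edges are chosen uniformly, independently
and with replacement from all `C(n,k)` possible `k`-subsets of `{1,…,n}`. -/
noncomputable def expSqNumColorings (k n m : ℕ) : ℝ :=
  (∑ E : Fin m → {s : Finset (Fin n) // s.card = k},
      (Nat.card {c : Fin n → Bool // ProperColoring E c} : ℝ) ^ 2) / ((n.choose k : ℝ) ^ m)

section AuxiliaryLemmas
open Finset Nat

lemma multinomial_rec {κ : Type*} [Fintype κ] [DecidableEq κ] (z : κ → ℕ) (n : ℕ)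
    (h : ∑ j, z j = n + 1) :
    Nat.multinomial univ z
      = ∑ j ∈ univ.filter (fun j => z j ≠ 0), Nat.multinomial univ (Function.update z j (z j - 1)) := by
  have hP : 0 < (∏ j, (z j).factorial) := by positivity
  apply Nat.eq_of_mul_eq_mul_left hP
  rw [Nat.multinomial_spec, h, Finset.mul_sum]
  have key : ∀ j ∈ univ.filter (fun j => z j ≠ 0),
      (∏ i, (z i).factorial) * Nat.multinomial univ (Function.update z j (z j - 1))
        = z j * n.factorial := by
    intro j hj
    simp only [mem_filter, mem_univ, true_and] at hj
    have hzj : z j - 1 + 1 = z j := Nat.succ_pred_eq_of_pos (Nat.pos_of_ne_zero hj)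
    have hupdate_sum : ∑ i, Function.update z j (z j - 1) i = n := by
      rw [Finset.sum_update_of_mem (mem_univ j)]
      have : ∑ i ∈ univ \ {j}, z i + z j = n + 1 := by
        rw [← h, ← Finset.sum_compl_add_sum {j} z]; simp [compl_eq_univ_sdiff]
      omega
    have hprod : (∏ i, (z i).factorial)
        = z j * ∏ i, (Function.update z j (z j - 1) i).factorial := by
      rw [← Finset.mul_prod_erase univ (fun i => (z i).factorial) (mem_univ j),
        ← Finset.mul_prod_erase univ (fun i => (Function.update z j (z j - 1) i).factorial)
          (mem_univ j)]
      have h1 : ∀ i ∈ univ.erase j,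
          (Function.update z j (z j - 1) i).factorial = (z i).factorial := by
        intro i hi
        rw [Function.update_of_ne (Finset.ne_of_mem_erase hi)]
      rw [Finset.prod_congr rfl h1, Function.update_self, ← mul_assoc, ← hzj,
        Nat.factorial_succ, hzj]
    rw [hprod, mul_assoc, Nat.multinomial_spec, hupdate_sum]
  rw [Finset.sum_congr rfl key, ← Finset.sum_mul]
  have : ∑ j ∈ univ.filter (fun j => z j ≠ 0), z j = n + 1 := by
    rw [← h]
    exact Finset.sum_filter_ne_zero _
  rw [this, Nat.factorial_succ]

lemma card_filter_succ {n : ℕ} {κ : Type*} [DecidableEq κ] (f : Fin (n+1) → κ) (j : κ) :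
    (univ.filter (fun i : Fin (n+1) => f i = j)).card
      = (if f 0 = j then 1 else 0) + (univ.filter (fun i : Fin n => f i.succ = j)).card := by
  rw [Finset.card_filter, Finset.card_filter, Fin.sum_univ_succ]

lemma card_fiber_eq_multinomial {κ : Type*} [Fintype κ] [DecidableEq κ] (n : ℕ) (z : κ → ℕ)
    (h : ∑ j, z j = n) :
    (univ.filter (fun f : Fin n → κ =>
        ∀ j, (univ.filter (fun i => f i = j)).card = z j)).card = Nat.multinomial univ z := by
  induction n generalizing z with
  | zero =>
    have hz : ∀ j, z j = 0 := by
      intro j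
      exact Finset.sum_eq_zero_iff.mp h j (mem_univ j)
    have : (univ.filter (fun f : Fin 0 → κ =>
        ∀ j, (univ.filter (fun i => f i = j)).card = z j)) = univ := by
      apply Finset.filter_true_of_mem
      intro f _ j
      simp [hz j]
    rw [this]
    simp [Nat.multinomial, hz]
  | succ n ih =>
    have hsplit : (univ.filter (fun f : Fin (n+1) → κ =>
          ∀ j, (univ.filter (fun i => f i = j)).card = z j)).card
        = ∑ a : κ, ((univ.filter (fun f : Fin (n+1) → κ =>
            (∀ j, (univ.filter (fun i => f i = j)).card = z j) ∧ f 0 = a))).card := by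
      rw [Finset.card_eq_sum_card_fiberwise (f := fun f : Fin (n+1) → κ => f 0)
        (t := univ) (fun x _ => mem_univ _)]
      congr 1; ext a
      rw [Finset.filter_filter]
    rw [hsplit, multinomial_rec z n h, Finset.sum_filter]
    clear hsplit
    apply Finset.sum_congr rfl
    intro a _
    by_cases ha : z a = 0
    · simp only [ha, ne_eq, not_true_eq_false, if_false]
      rw [Finset.card_eq_zero, Finset.filter_eq_empty_iff]
      rintro f _ ⟨hP, hf0⟩
      have h1 : 0 < (univ.filter (fun i : Fin (n+1) => f i = a)).card :=
        Finset.card_pos.mpr ⟨0, by simp [hf0]⟩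
      rw [hP a, ha] at h1
      exact lt_irrefl 0 h1
    · simp only [ha, ne_eq, not_false_eq_true, if_true]
      have hsum' : ∑ j, Function.update z a (z a - 1) j = n := by
        rw [Finset.sum_update_of_mem (mem_univ a)]
        have h2 : ∑ i ∈ univ \ {a}, z i + z a = n + 1 := by
          rw [← h, ← Finset.sum_compl_add_sum {a} z]; simp [compl_eq_univ_sdiff]
        omega
      rw [← ih (Function.update z a (z a - 1)) hsum']
      refine Finset.card_bij' (fun f _ => fun i : Fin n => f i.succ)
        (fun g _ => Fin.cons a g) ?_ ?_ ?_ ?_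
      · -- hi
        rintro f hf
        simp only [mem_filter, mem_univ, true_and] at hf ⊢
        obtain ⟨hP, hf0⟩ := hf
        intro j
        beta_reduce
        have hj := hP j
        rw [card_filter_succ, hf0] at hj
        by_cases hja : a = j
        · subst hja
          simp only [eq_self_iff_true, if_true] at hj
          rw [Function.update_self]
          omega
        · rw [Function.update_of_ne (Ne.symm hja)]
          simpa [hja] using hj
      · -- hj
        rintro g hg
        simp only [mem_filter, mem_univ, true_and] at hg ⊢
        refine ⟨fun j => ?_, by simp⟩
        rw [card_filter_succ]
        simp only [Fin.cons_zero, Fin.cons_succ]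
        rw [hg j]
        by_cases hja : a = j
        · subst hja
          rw [Function.update_self, if_pos rfl]
          omega
        · rw [Function.update_of_ne (Ne.symm hja), if_neg hja, Nat.zero_add]
      · -- left inverse
        rintro f hf
        simp only [mem_filter, mem_univ, true_and] at hf
        funext i
        cases i using Fin.cases with
        | zero => simp [hf.2]
        | succ i => simp
      · -- right inverse
        rintro g _
        funext i
        simp


/-- encoding of a pair of booleans as an element of `Fin 4` -/
def encBB : Bool → Bool → Fin 4
  | false, false => 0
  | false, true => 1
  | true, false => 2
  | true, true => 3

lemma mono_iff {n : ℕ} (c : Fin n → Bool) {s : Finset (Fin n)} (hs : s.Nonempty) :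
    (¬ ∃ u ∈ s, ∃ v ∈ s, c u ≠ c v)
      ↔ s ⊆ univ.filter (fun v => c v = false) ∨ s ⊆ univ.filter (fun v => c v = true) := by
  push_neg
  constructor
  · intro h
    obtain ⟨w, hw⟩ := hs
    cases hcw : c w with
    | false =>
      left
      intro v hv
      simp only [mem_filter, mem_univ, true_and]
      rw [h v hv w hw, hcw]
    | true =>
      right
      intro v hv
      simp only [mem_filter, mem_univ, true_and]
      rw [h v hv w hw, hcw]
  · rintro (h | h) u hu v hv
    · have h1 := h hu; have h2 := h hv
      simp only [mem_filter, mem_univ, true_and] at h1 h2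
      rw [h1, h2]
    · have h1 := h hu; have h2 := h hv
      simp only [mem_filter, mem_univ, true_and] at h1 h2
      rw [h1, h2]

lemma card_filter_subset_powersetCard {n k : ℕ} (A : Finset (Fin n)) :
    ((Finset.powersetCard k (univ : Finset (Fin n))).filter (fun s => s ⊆ A)).card
      = A.card.choose k := by
  rw [← Finset.card_powersetCard]
  congr 1
  ext s
  simp only [mem_filter, Finset.mem_powersetCard_univ, Finset.mem_powersetCard]
  exact ⟨fun h => ⟨h.2, h.1.2⟩, fun h => ⟨⟨Finset.subset_univ s, h.2⟩, h.1⟩⟩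

lemma disj_filter_subset {n k : ℕ} (hk : 1 ≤ k) {X Y : Finset (Fin n)} (hXY : X ∩ Y = ∅) :
    Disjoint ((Finset.powersetCard k (univ : Finset (Fin n))).filter (fun s => s ⊆ X))
      ((Finset.powersetCard k (univ : Finset (Fin n))).filter (fun s => s ⊆ Y)) := by
  rw [Finset.disjoint_left]
  rintro s hs hs'
  simp only [mem_filter, Finset.mem_powersetCard_univ] at hs hs'
  have : s ⊆ X ∩ Y := Finset.subset_inter hs.2 hs'.2
  rw [hXY, Finset.subset_empty] at this
  rw [this] at hs
  simp only [Finset.card_empty] at hs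
  omega


def zeta {n : ℕ} (c d : Fin n → Bool) (j : Fin 4) : ℕ :=
  (univ.filter (fun i => encBB (c i) (d i) = j)).card

section
variable {n k : ℕ} (c d : Fin n → Bool)

private abbrev W (c d : Fin n → Bool) (j : Fin 4) : Finset (Fin n) :=
  univ.filter (fun i => encBB (c i) (d i) = j)

lemma W_inter (j j' : Fin 4) (h : j ≠ j') : W c d j ∩ W c d j' = ∅ := by
  rw [Finset.eq_empty_iff_forall_notMem]
  intro v hv
  rw [Finset.mem_inter, mem_filter, mem_filter] at hv
  exact h (hv.1.2 ▸ hv.2.2 ▸ rfl)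

lemma W_disjoint (j j' : Fin 4) (h : j ≠ j') : Disjoint (W c d j) (W c d j') :=
  Finset.disjoint_iff_inter_eq_empty.mpr (W_inter c d j j' h)

lemma A0_eq : univ.filter (fun v => c v = false) = W c d 0 ∪ W c d 1 := by
  ext v
  simp only [mem_filter, mem_univ, true_and, Finset.mem_union]
  cases hc : c v <;> cases hd : d v <;> simp [encBB] <;> decide

lemma A1_eq : univ.filter (fun v => c v = true) = W c d 2 ∪ W c d 3 := by
  ext v
  simp only [mem_filter, mem_univ, true_and, Finset.mem_union]
  cases hc : c v <;> cases hd : d v <;> simp [encBB] <;> decide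

lemma B0_eq : univ.filter (fun v => d v = false) = W c d 0 ∪ W c d 2 := by
  ext v
  simp only [mem_filter, mem_univ, true_and, Finset.mem_union]
  cases hc : c v <;> cases hd : d v <;> simp [encBB] <;> decide

lemma B1_eq : univ.filter (fun v => d v = true) = W c d 1 ∪ W c d 3 := by
  ext v
  simp only [mem_filter, mem_univ, true_and, Finset.mem_union]
  cases hc : c v <;> cases hd : d v <;> simp [encBB] <;> decide

lemma AB_inter_00 : (W c d 0 ∪ W c d 1) ∩ (W c d 0 ∪ W c d 2) = W c d 0 := by
  ext v
  simp only [Finset.mem_inter, Finset.mem_union, mem_filter, mem_univ, true_and]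
  generalize encBB (c v) (d v) = x
  revert x; decide

lemma AB_inter_01 : (W c d 0 ∪ W c d 1) ∩ (W c d 1 ∪ W c d 3) = W c d 1 := by
  ext v
  simp only [Finset.mem_inter, Finset.mem_union, mem_filter, mem_univ, true_and]
  generalize encBB (c v) (d v) = x
  revert x; decide

lemma AB_inter_10 : (W c d 2 ∪ W c d 3) ∩ (W c d 0 ∪ W c d 2) = W c d 2 := by
  ext v
  simp only [Finset.mem_inter, Finset.mem_union, mem_filter, mem_univ, true_and]
  generalize encBB (c v) (d v) = x
  revert x; decide

lemma AB_inter_11 : (W c d 2 ∪ W c d 3) ∩ (W c d 1 ∪ W c d 3) = W c d 3 := by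
  ext v
  simp only [Finset.mem_inter, Finset.mem_union, mem_filter, mem_univ, true_and]
  generalize encBB (c v) (d v) = x
  revert x; decide

lemma A_inter : (W c d 0 ∪ W c d 1) ∩ (W c d 2 ∪ W c d 3) = ∅ := by
  rw [Finset.eq_empty_iff_forall_notMem]
  intro v hv
  simp only [Finset.mem_inter, Finset.mem_union, mem_filter, mem_univ, true_and] at hv
  revert hv
  generalize encBB (c v) (d v) = x
  revert x; decide

lemma B_inter : (W c d 0 ∪ W c d 2) ∩ (W c d 1 ∪ W c d 3) = ∅ := by
  rw [Finset.eq_empty_iff_forall_notMem]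
  intro v hv
  simp only [Finset.mem_inter, Finset.mem_union, mem_filter, mem_univ, true_and] at hv
  revert hv
  generalize encBB (c v) (d v) = x
  revert x; decide

end

lemma good_count {n k : ℕ} (hk : 1 ≤ k) (c d : Fin n → Bool) :
    ((Finset.powersetCard k (univ : Finset (Fin n))).filter
        (fun s => (∃ u ∈ s, ∃ v ∈ s, c u ≠ c v) ∧ (∃ u ∈ s, ∃ v ∈ s, d u ≠ d v))).card
      + ((zeta c d 0 + zeta c d 1).choose k + (zeta c d 2 + zeta c d 3).choose k
        + (zeta c d 0 + zeta c d 2).choose k + (zeta c d 1 + zeta c d 3).choose k)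
      = n.choose k + ((zeta c d 0).choose k + (zeta c d 1).choose k
        + (zeta c d 2).choose k + (zeta c d 3).choose k) := by
  classical
  set P := Finset.powersetCard k (univ : Finset (Fin n)) with hPdef
  have hsNe : ∀ s ∈ P, s.Nonempty := by
    intro s hs
    rw [hPdef, Finset.mem_powersetCard_univ] at hs
    exact Finset.card_pos.mp (by omega)
  set pA : Finset (Fin n) → Prop :=
    fun s => s ⊆ W c d 0 ∪ W c d 1 ∨ s ⊆ W c d 2 ∪ W c d 3 with hpA
  set pB : Finset (Fin n) → Prop :=
    fun s => s ⊆ W c d 0 ∪ W c d 2 ∨ s ⊆ W c d 1 ∪ W c d 3 with hpB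
  -- step A: bad set characterization
  have hbadEq : P.filter (fun s => ¬((∃ u ∈ s, ∃ v ∈ s, c u ≠ c v)
        ∧ (∃ u ∈ s, ∃ v ∈ s, d u ≠ d v)))
      = P.filter (fun s => pA s ∨ pB s) := by
    apply Finset.filter_congr
    intro s hs
    rw [not_and_or]
    constructor
    · rintro (h | h)
      · left
        have := (mono_iff c (hsNe s hs)).mp h
        rwa [A0_eq c d, A1_eq c d] at this
      · right
        have := (mono_iff d (hsNe s hs)).mp h
        rwa [B0_eq c d, B1_eq c d] at this
    · rintro (h | h)
      · left
        apply (mono_iff c (hsNe s hs)).mpr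
        rwa [A0_eq c d, A1_eq c d]
      · right
        apply (mono_iff d (hsNe s hs)).mpr
        rwa [B0_eq c d, B1_eq c d]
  -- step: total
  have htotal : (P.filter (fun s => (∃ u ∈ s, ∃ v ∈ s, c u ≠ c v)
        ∧ (∃ u ∈ s, ∃ v ∈ s, d u ≠ d v))).card
      + (P.filter (fun s => pA s ∨ pB s)).card = n.choose k := by
    rw [← hbadEq, Finset.card_filter_add_card_filter_not, hPdef,
      Finset.card_powersetCard, Finset.card_univ, Fintype.card_fin]
  -- step B
  have hB2 : (P.filter (fun s => pA s ∨ pB s)).card + (P.filter (fun s => pA s ∧ pB s)).card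
      = (P.filter pA).card + (P.filter pB).card := by
    rw [Finset.filter_or, Finset.filter_and]
    exact Finset.card_union_add_card_inter _ _
  -- card of W unions
  have hcard01 : (W c d 0 ∪ W c d 1).card = zeta c d 0 + zeta c d 1 :=
    Finset.card_union_of_disjoint (W_disjoint c d 0 1 (by decide))
  have hcard23 : (W c d 2 ∪ W c d 3).card = zeta c d 2 + zeta c d 3 :=
    Finset.card_union_of_disjoint (W_disjoint c d 2 3 (by decide))
  have hcard02 : (W c d 0 ∪ W c d 2).card = zeta c d 0 + zeta c d 2 :=
    Finset.card_union_of_disjoint (W_disjoint c d 0 2 (by decide))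
  have hcard13 : (W c d 1 ∪ W c d 3).card = zeta c d 1 + zeta c d 3 :=
    Finset.card_union_of_disjoint (W_disjoint c d 1 3 (by decide))
  -- step C
  have hCA : (P.filter pA).card = (zeta c d 0 + zeta c d 1).choose k
      + (zeta c d 2 + zeta c d 3).choose k := by
    simp only [hpA]
    rw [Finset.filter_or,
      Finset.card_union_of_disjoint (disj_filter_subset hk (A_inter c d)),
      card_filter_subset_powersetCard, card_filter_subset_powersetCard, hcard01, hcard23]
  have hCB : (P.filter pB).card = (zeta c d 0 + zeta c d 2).choose k
      + (zeta c d 1 + zeta c d 3).choose k := by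
    simp only [hpB]
    rw [Finset.filter_or,
      Finset.card_union_of_disjoint (disj_filter_subset hk (B_inter c d)),
      card_filter_subset_powersetCard, card_filter_subset_powersetCard, hcard02, hcard13]
  -- step D
  have hDeq : P.filter (fun s => pA s ∧ pB s)
      = P.filter (fun s => s ⊆ W c d 0 ∨ s ⊆ W c d 1 ∨ s ⊆ W c d 2 ∨ s ⊆ W c d 3) := by
    apply Finset.filter_congr
    intro s _
    constructor
    · rintro ⟨hA | hA, hB | hB⟩
      · exact Or.inl ((AB_inter_00 c d) ▸ Finset.subset_inter hA hB)
      · exact Or.inr (Or.inl ((AB_inter_01 c d) ▸ Finset.subset_inter hA hB))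
      · exact Or.inr (Or.inr (Or.inl ((AB_inter_10 c d) ▸ Finset.subset_inter hA hB)))
      · exact Or.inr (Or.inr (Or.inr ((AB_inter_11 c d) ▸ Finset.subset_inter hA hB)))
    · rintro (h | h | h | h)
      · exact ⟨Or.inl (h.trans Finset.subset_union_left),
          Or.inl (h.trans Finset.subset_union_left)⟩
      · exact ⟨Or.inl (h.trans Finset.subset_union_right),
          Or.inr (h.trans Finset.subset_union_left)⟩
      · exact ⟨Or.inr (h.trans Finset.subset_union_left),
          Or.inl (h.trans Finset.subset_union_right)⟩
      · exact ⟨Or.inr (h.trans Finset.subset_union_right),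
          Or.inr (h.trans Finset.subset_union_right)⟩
  have hD : (P.filter (fun s => pA s ∧ pB s)).card
      = (zeta c d 0).choose k + (zeta c d 1).choose k
        + (zeta c d 2).choose k + (zeta c d 3).choose k := by
    rw [hDeq]
    rw [Finset.filter_or, Finset.filter_or, Finset.filter_or]
    rw [Finset.card_union_of_disjoint, Finset.card_union_of_disjoint,
      Finset.card_union_of_disjoint]
    · rw [card_filter_subset_powersetCard, card_filter_subset_powersetCard,
        card_filter_subset_powersetCard, card_filter_subset_powersetCard]
      have hzz : ∀ j, (W c d j).card = zeta c d j := fun _ => rfl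
      simp only [hzz]
      omega
    · exact disj_filter_subset hk (W_inter c d 2 3 (by decide))
    · rw [Finset.disjoint_union_right]
      exact ⟨disj_filter_subset hk (W_inter c d 1 2 (by decide)),
        disj_filter_subset hk (W_inter c d 1 3 (by decide))⟩
    · rw [Finset.disjoint_union_right, Finset.disjoint_union_right]
      exact ⟨disj_filter_subset hk (W_inter c d 0 1 (by decide)),
        disj_filter_subset hk (W_inter c d 0 2 (by decide)),
        disj_filter_subset hk (W_inter c d 0 3 (by decide))⟩
  omega

def decBB : Fin 4 → Bool × Bool := ![(false, false), (false, true), (true, false), (true, true)]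

lemma decBB_encBB : ∀ b b' : Bool, decBB (encBB b b') = (b, b') := by decide

lemma encBB_decBB : ∀ x : Fin 4, encBB (decBB x).1 (decBB x).2 = x := by decide

lemma card_pair_fiber {n : ℕ} (z : Fin 4 → ℕ) (h : ∑ j, z j = n) :
    ((univ : Finset ((Fin n → Bool) × (Fin n → Bool))).filter
        (fun p => ∀ j, zeta p.1 p.2 j = z j)).card = Nat.multinomial univ z := by
  classical
  rw [← card_fiber_eq_multinomial n z h]
  refine Finset.card_bij' (fun p _ => fun v => encBB (p.1 v) (p.2 v))
    (fun g _ => (fun v => (decBB (g v)).1, fun v => (decBB (g v)).2)) ?_ ?_ ?_ ?_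
  · intro p hp
    simp only [mem_filter, mem_univ, true_and] at hp ⊢
    intro j
    beta_reduce
    exact hp j
  · intro g hg
    simp only [mem_filter, mem_univ, true_and] at hg ⊢
    intro j
    unfold zeta
    rw [← hg j]
    congr 1
    apply Finset.filter_congr
    intro v _
    beta_reduce
    rw [encBB_decBB]
  · intro p hp
    ext v
    · simp [decBB_encBB]
    · simp [decBB_encBB]
  · intro g hg
    funext v
    beta_reduce
    rw [encBB_decBB]

lemma sum_ite_edges {n k : ℕ} (hk : 1 ≤ k) (c d : Fin n → Bool) :
    (∑ s : {s : Finset (Fin n) // s.card = k},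
        if (∃ u ∈ s.1, ∃ v ∈ s.1, c u ≠ c v) ∧ (∃ u ∈ s.1, ∃ v ∈ s.1, d u ≠ d v)
        then (1:ℝ) else 0)
      = (n.choose k : ℝ)
        - (((zeta c d 0 + zeta c d 1).choose k : ℝ) + ((zeta c d 2 + zeta c d 3).choose k : ℝ)
          + ((zeta c d 0 + zeta c d 2).choose k : ℝ) + ((zeta c d 1 + zeta c d 3).choose k : ℝ)
          - ((zeta c d 0).choose k : ℝ) - ((zeta c d 1).choose k : ℝ)
          - ((zeta c d 2).choose k : ℝ) - ((zeta c d 3).choose k : ℝ)) := by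
  classical
  rw [← Finset.sum_subtype (Finset.powersetCard k (univ : Finset (Fin n)))
      (fun s => Finset.mem_powersetCard_univ)
      (fun s : Finset (Fin n) =>
        if (∃ u ∈ s, ∃ v ∈ s, c u ≠ c v) ∧ (∃ u ∈ s, ∃ v ∈ s, d u ≠ d v) then (1:ℝ) else 0)]
  rw [Finset.sum_boole]
  have h := good_count hk c d
  have h' : (((Finset.powersetCard k (univ : Finset (Fin n))).filter
      (fun s => (∃ u ∈ s, ∃ v ∈ s, c u ≠ c v) ∧ (∃ u ∈ s, ∃ v ∈ s, d u ≠ d v))).card : ℝ)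
      + (((zeta c d 0 + zeta c d 1).choose k : ℝ) + ((zeta c d 2 + zeta c d 3).choose k : ℝ)
        + ((zeta c d 0 + zeta c d 2).choose k : ℝ) + ((zeta c d 1 + zeta c d 3).choose k : ℝ))
      = (n.choose k : ℝ) + (((zeta c d 0).choose k : ℝ) + ((zeta c d 1).choose k : ℝ)
        + ((zeta c d 2).choose k : ℝ) + ((zeta c d 3).choose k : ℝ)) := by
    exact_mod_cast h
  linarith


lemma group_pairs {n : ℕ} (F : (Fin 4 → ℕ) → ℝ) :
    (∑ p ∈ ((univ ×ˢ univ) : Finset ((Fin n → Bool) × (Fin n → Bool))),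
        F (fun j => zeta p.1 p.2 j))
      = ∑ z ∈ Finset.Nat.antidiagonalTuple 4 n, (Nat.multinomial univ z : ℝ) * F z := by
  classical
  have hmaps : ∀ p ∈ ((univ ×ˢ univ) : Finset ((Fin n → Bool) × (Fin n → Bool))),
      (fun j : Fin 4 => zeta p.1 p.2 j) ∈ Finset.Nat.antidiagonalTuple 4 n := by
    intro p _
    rw [Finset.Nat.mem_antidiagonalTuple]
    have hcard := Finset.card_eq_sum_card_fiberwise
      (f := fun v : Fin n => encBB (p.1 v) (p.2 v)) (s := univ) (t := univ)
      (fun x _ => mem_univ _)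
    rw [Finset.card_univ, Fintype.card_fin] at hcard
    exact hcard.symm
  rw [← Finset.sum_fiberwise_of_maps_to hmaps (fun p => F (fun j => zeta p.1 p.2 j))]
  apply Finset.sum_congr rfl
  intro z hz
  have hzn : ∑ j, z j = n := Finset.Nat.mem_antidiagonalTuple.mp hz
  have hfilt : ((univ ×ˢ univ) : Finset ((Fin n → Bool) × (Fin n → Bool))).filter
        (fun p => (fun j : Fin 4 => zeta p.1 p.2 j) = z)
      = (univ : Finset ((Fin n → Bool) × (Fin n → Bool))).filter
        (fun p => ∀ j, zeta p.1 p.2 j = z j) := by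
    rw [Finset.univ_product_univ]
    exact Finset.filter_congr (fun p _ => funext_iff)
  rw [Finset.sum_congr hfilt (fun p hp => congrArg F (funext (Finset.mem_filter.mp hp).2)),
    Finset.sum_const, card_pair_fiber z hzn, nsmul_eq_mul]


/-- Second moment formula: for k ≥ 3, n ≥ k, m ≥ 1, E[X²] equals the sum over all
quadruples (z₁,z₂,z₃,z₄) of non-negative integers with z₁+z₂+z₃+z₄ = n of the
multinomial coefficient n!/(z₁!z₂!z₃!z₄!) times
(1 − (C(z₁+z₂,k) + C(z₃+z₄,k) + C(z₁+z₃,k) + C(z₂+z₄,k)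
      − C(z₁,k) − C(z₂,k) − C(z₃,k) − C(z₄,k))/C(n,k))^m. -/
theorem second_moment_formula (k n m : ℕ) (hk : 3 ≤ k) (hn : k ≤ n) (hm : 1 ≤ m) :
    expSqNumColorings k n m =
      ∑ z ∈ Finset.Nat.antidiagonalTuple 4 n, (Nat.multinomial Finset.univ z : ℝ) *
        (1 - (((z 0 + z 1).choose k : ℝ) + ((z 2 + z 3).choose k : ℝ)
            + ((z 0 + z 2).choose k : ℝ) + ((z 1 + z 3).choose k : ℝ)
            - ((z 0).choose k : ℝ) - ((z 1).choose k : ℝ)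
            - ((z 2).choose k : ℝ) - ((z 3).choose k : ℝ)) / (n.choose k : ℝ)) ^ m := by
  classical
  have hk1 : 1 ≤ k := by omega
  have hN : (0:ℝ) < (n.choose k : ℝ) := by exact_mod_cast Nat.choose_pos hn
  unfold expSqNumColorings
  -- Step 1
  have h1 : ∀ E : Fin m → {s : Finset (Fin n) // s.card = k},
      (Nat.card {c : Fin n → Bool // ProperColoring E c} : ℝ) ^ 2
        = ∑ c : Fin n → Bool, ∑ d : Fin n → Bool,
            if ProperColoring E c ∧ ProperColoring E d then (1:ℝ) else 0 := by
    intro E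
    rw [Nat.card_eq_fintype_card, Fintype.card_subtype, sq,
      ← Finset.sum_boole (fun c : Fin n → Bool => ProperColoring E c) univ,
      Finset.sum_mul_sum]
    apply Finset.sum_congr rfl
    intro c _
    apply Finset.sum_congr rfl
    intro d _
    by_cases h1 : ProperColoring E c <;> by_cases h2 : ProperColoring E d <;>
      simp [h1, h2]
  simp only [h1]
  -- Step 2 : swap sums
  rw [Finset.sum_comm]
  have h2 : ∀ c : Fin n → Bool, (∑ E : Fin m → {s : Finset (Fin n) // s.card = k},
      ∑ d : Fin n → Bool,
        if ProperColoring E c ∧ ProperColoring E d then (1:ℝ) else 0)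
      = ∑ d : Fin n → Bool, ((n.choose k : ℝ)
        - (((zeta c d 0 + zeta c d 1).choose k : ℝ) + ((zeta c d 2 + zeta c d 3).choose k : ℝ)
          + ((zeta c d 0 + zeta c d 2).choose k : ℝ) + ((zeta c d 1 + zeta c d 3).choose k : ℝ)
          - ((zeta c d 0).choose k : ℝ) - ((zeta c d 1).choose k : ℝ)
          - ((zeta c d 2).choose k : ℝ) - ((zeta c d 3).choose k : ℝ))) ^ m := by
    intro c
    rw [Finset.sum_comm]
    apply Finset.sum_congr rfl
    intro d _
    -- per pair
    have hiff : ∀ E : Fin m → {s : Finset (Fin n) // s.card = k},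
        (ProperColoring E c ∧ ProperColoring E d) ↔
        (∀ i ∈ (univ : Finset (Fin m)),
          (∃ u ∈ (E i).1, ∃ v ∈ (E i).1, c u ≠ c v)
            ∧ (∃ u ∈ (E i).1, ∃ v ∈ (E i).1, d u ≠ d v)) := by
      intro E
      unfold ProperColoring
      constructor
      · rintro ⟨ha, hb⟩ i _
        exact ⟨ha i, hb i⟩
      · intro h
        exact ⟨fun i => (h i (mem_univ i)).1, fun i => (h i (mem_univ i)).2⟩
    calc (∑ E : Fin m → {s : Finset (Fin n) // s.card = k},
          if ProperColoring E c ∧ ProperColoring E d then (1:ℝ) else 0)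
        = ∑ E : Fin m → {s : Finset (Fin n) // s.card = k}, ∏ i : Fin m,
            if (∃ u ∈ (E i).1, ∃ v ∈ (E i).1, c u ≠ c v)
              ∧ (∃ u ∈ (E i).1, ∃ v ∈ (E i).1, d u ≠ d v) then (1:ℝ) else 0 := by
          apply Finset.sum_congr rfl
          intro E _
          rw [Finset.prod_boole]
          by_cases hP : ProperColoring E c ∧ ProperColoring E d
          · rw [if_pos hP, if_pos ((hiff E).mp hP)]
          · rw [if_neg hP, if_neg (fun h => hP ((hiff E).mpr h))]
      _ = (∑ s : {s : Finset (Fin n) // s.card = k},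
            if (∃ u ∈ s.1, ∃ v ∈ s.1, c u ≠ c v) ∧ (∃ u ∈ s.1, ∃ v ∈ s.1, d u ≠ d v)
            then (1:ℝ) else 0) ^ m := by
          rw [← Fintype.piFinset_univ, ← Finset.prod_univ_sum
              (fun _ : Fin m => (univ : Finset {s : Finset (Fin n) // s.card = k}))
              (fun _ s => if (∃ u ∈ s.1, ∃ v ∈ s.1, c u ≠ c v)
                ∧ (∃ u ∈ s.1, ∃ v ∈ s.1, d u ≠ d v) then (1:ℝ) else 0),
            Finset.prod_const, Finset.card_univ, Fintype.card_fin]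
      _ = _ := by rw [sum_ite_edges hk1 c d]
  simp only [h2]
  -- Step 3 : grouping
  rw [← Finset.sum_product']
  have h3 : (∑ x ∈ ((univ ×ˢ univ) : Finset ((Fin n → Bool) × (Fin n → Bool))),
      ((n.choose k : ℝ)
        - (((zeta x.1 x.2 0 + zeta x.1 x.2 1).choose k : ℝ)
          + ((zeta x.1 x.2 2 + zeta x.1 x.2 3).choose k : ℝ)
          + ((zeta x.1 x.2 0 + zeta x.1 x.2 2).choose k : ℝ)
          + ((zeta x.1 x.2 1 + zeta x.1 x.2 3).choose k : ℝ)
          - ((zeta x.1 x.2 0).choose k : ℝ) - ((zeta x.1 x.2 1).choose k : ℝ)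
          - ((zeta x.1 x.2 2).choose k : ℝ) - ((zeta x.1 x.2 3).choose k : ℝ))) ^ m)
      = ∑ z ∈ Finset.Nat.antidiagonalTuple 4 n, (Nat.multinomial univ z : ℝ) *
          ((n.choose k : ℝ)
            - (((z 0 + z 1).choose k : ℝ) + ((z 2 + z 3).choose k : ℝ)
              + ((z 0 + z 2).choose k : ℝ) + ((z 1 + z 3).choose k : ℝ)
              - ((z 0).choose k : ℝ) - ((z 1).choose k : ℝ)
              - ((z 2).choose k : ℝ) - ((z 3).choose k : ℝ))) ^ m :=
    group_pairs (fun w => ((n.choose k : ℝ)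
      - (((w 0 + w 1).choose k : ℝ) + ((w 2 + w 3).choose k : ℝ)
        + ((w 0 + w 2).choose k : ℝ) + ((w 1 + w 3).choose k : ℝ)
        - ((w 0).choose k : ℝ) - ((w 1).choose k : ℝ)
        - ((w 2).choose k : ℝ) - ((w 3).choose k : ℝ))) ^ m)
  rw [h3, Finset.sum_div]
  apply Finset.sum_congr rfl
  intro z _
  rw [mul_div_assoc, ← div_pow, sub_div, div_self hN.ne']

end AuxiliaryLemmas
end

section
/- Fix an integer k ≥ 3 and a real r > 0. If (α,β,γ) is a local extremum of g_r in the interior of its domain {(α,β,γ) : 0 < γ < min(α,β), α + β − γ < 1}, then α = β = 1/2. -/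
open Real

/-- `p(α,β,γ)`: the probability that a random `k`-subset is bichromatic under both of a
pair of colorings with black densities `α`, `β` and overlap `γ`. -/
noncomputable def hypP (k : ℕ) (α β γ : ℝ) : ℝ :=
  1 - α ^ k - (1 - α) ^ k - β ^ k - (1 - β) ^ k + γ ^ k + (α - γ) ^ k
    + (β - γ) ^ k + (1 - α - β + γ) ^ k

/-- The second-moment rate function
`g_r(α,β,γ) = (p(α,β,γ)/q²)^r / (4 γ^γ (α−γ)^{α−γ} (β−γ)^{β−γ} (1−α−β+γ)^{1−α−β+γ})`
with `q = 1 − 2^{1−k}` and the convention `0^0 = 1` (satisfied by `Real.rpow`). -/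
noncomputable def hypG (k : ℕ) (r : ℝ) (α β γ : ℝ) : ℝ :=
  (hypP k α β γ / (1 - (2 : ℝ) ^ (1 - (k : ℝ))) ^ 2) ^ r /
    (4 * γ ^ γ * (α - γ) ^ (α - γ) * (β - γ) ^ (β - γ) *
      (1 - α - β + γ) ^ (1 - α - β + γ))

section Aux
open Finset Topology

lemma aux_pow_mono (n : ℕ) {x y z : ℝ} (hx : 0 ≤ x) (hy : 0 ≤ y) (hyz : y ≤ z) :
    z ^ n - y ^ n ≤ (x + z) ^ n - (x + y) ^ n := by
  have h1 := geom_sum₂_mul z y n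
  have h2 := geom_sum₂_mul (x + z) (x + y) n
  have hxy : (x + z) - (x + y) = z - y := by ring
  rw [← h1, ← h2, hxy]
  refine mul_le_mul_of_nonneg_right ?_ (by linarith)
  refine Finset.sum_le_sum fun i _ => ?_
  have hz : 0 ≤ z := le_trans hy hyz
  exact mul_le_mul (pow_le_pow_left₀ hz (by linarith) _)
    (pow_le_pow_left₀ hy (by linarith) _) (pow_nonneg hy _) (pow_nonneg (by linarith) _)

lemma hypP_pos' (k : ℕ) (hk : 3 ≤ k) {a b c d : ℝ} (ha : 0 < a) (hb : 0 < b)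
    (hc : 0 < c) (hd : 0 < d) (hsum : a + b + c + d = 1) :
    0 < hypP k (c + a) (c + b) c := by
  have e1 : 1 - (c + a) = b + d := by linarith
  have e2 : 1 - (c + b) = a + d := by linarith
  have e3 : (c + a) - c = a := by ring
  have e4 : (c + b) - c = b := by ring
  have e5 : b + d - (c + b) + c = d := by linarith
  have hPeq : hypP k (c + a) (c + b) c
      = 1 - (c + a) ^ k - (b + d) ^ k - (c + b) ^ k - (a + d) ^ k
        + c ^ k + a ^ k + b ^ k + d ^ k := by
    rw [hypP, e1, e2, e3, e4, e5]
  set f : ℕ → ℝ := fun j =>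
    (k.choose j : ℝ) * ((c + a) ^ j * (b + d) ^ (k - j) - c ^ j * b ^ (k - j) - a ^ j * d ^ (k - j))
    with hf_def
  have hsum1 : ∑ j ∈ range (k + 1), (k.choose j : ℝ) * ((c + a) ^ j * (b + d) ^ (k - j))
      = ((c + a) + (b + d)) ^ k := by
    rw [add_pow]; exact Finset.sum_congr rfl fun j _ => by ring
  have hsum2 : ∑ j ∈ range (k + 1), (k.choose j : ℝ) * (c ^ j * b ^ (k - j)) = (c + b) ^ k := by
    rw [add_pow]; exact Finset.sum_congr rfl fun j _ => by ring
  have hsum3 : ∑ j ∈ range (k + 1), (k.choose j : ℝ) * (a ^ j * d ^ (k - j)) = (a + d) ^ k := by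
    rw [add_pow]; exact Finset.sum_congr rfl fun j _ => by ring
  have htot : ∑ j ∈ range (k + 1), f j
      = ((c + a) + (b + d)) ^ k - (c + b) ^ k - (a + d) ^ k := by
    rw [← hsum1, ← hsum2, ← hsum3, ← Finset.sum_sub_distrib, ← Finset.sum_sub_distrib]
    exact Finset.sum_congr rfl fun j _ => by ring
  obtain ⟨m, hm⟩ : ∃ m, k = m + 2 := ⟨k - 2, by omega⟩
  have hsplit : ∑ j ∈ range (k + 1), f j
      = f 0 + (∑ j ∈ range (m + 1), f (j + 1)) + f k := by
    rw [Finset.sum_range_succ, hm, Finset.sum_range_succ']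
    ring
  have hcad : (c + a) + (b + d) = 1 := by linarith
  have hf0 : f 0 = (b + d) ^ k - b ^ k - d ^ k := by
    simp [hf_def]
  have hfk : f k = (c + a) ^ k - c ^ k - a ^ k := by
    simp [hf_def]
  have hPsum : hypP k (c + a) (c + b) c = ∑ j ∈ range (m + 1), f (j + 1) := by
    have h1 : ∑ j ∈ range (m + 1), f (j + 1)
        = ((c + a) + (b + d)) ^ k - (c + b) ^ k - (a + d) ^ k - f 0 - f k := by
      rw [← htot, hsplit]; ring
    rw [hPeq, h1, hf0, hfk, hcad, one_pow]; ring
  rw [hPsum]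
  apply Finset.sum_pos _ (by simp)
  intro j hj
  simp only [Finset.mem_range] at hj
  have hj1 : j + 1 ≤ k := by omega
  have hj2 : 1 ≤ k - (j + 1) := by omega
  have hjne : j + 1 ≠ 0 := by omega
  have hkjne : k - (j + 1) ≠ 0 := by omega
  refine mul_pos (by exact_mod_cast Nat.choose_pos hj1) ?_
  have hA := pow_add_pow_le (le_of_lt hc) (le_of_lt ha) hjne
  have hB := pow_add_pow_le (le_of_lt hb) (le_of_lt hd) hkjne
  have h1 : (c ^ (j+1) + a ^ (j+1)) * (b ^ (k-(j+1)) + d ^ (k-(j+1)))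
      ≤ (c + a) ^ (j+1) * (b + d) ^ (k-(j+1)) := by
    apply mul_le_mul hA hB (by positivity) (by positivity)
  nlinarith [mul_pos (pow_pos hc (j+1)) (pow_pos hd (k-(j+1))),
    mul_pos (pow_pos ha (j+1)) (pow_pos hb (k-(j+1)))]

lemma hypP_pos (k : ℕ) (hk : 3 ≤ k) {α β γ : ℝ}
    (h1 : 0 < γ) (h2 : γ < α) (h3 : γ < β) (h4 : α + β - γ < 1) :
    0 < hypP k α β γ := by
  have := hypP_pos' k hk (a := α - γ) (b := β - γ) (c := γ) (d := 1 - α - β + γ)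
    (by linarith) (by linarith) h1 (by linarith) (by ring)
  have he : γ + (α - γ) = α := by ring
  have he2 : γ + (β - γ) = β := by ring
  rwa [he, he2] at this

lemma hypQ_pos (k : ℕ) (hk : 3 ≤ k) : 0 < 1 - (2 : ℝ) ^ (1 - (k : ℝ)) := by
  have hk3 : (3 : ℝ) ≤ (k : ℝ) := by exact_mod_cast hk
  have : (2 : ℝ) ^ (1 - (k : ℝ)) < 1 :=
    rpow_lt_one_of_one_lt_of_neg one_lt_two (by linarith)
  linarith

lemma hypG_pos (k : ℕ) (hk : 3 ≤ k) (r : ℝ) {x y z : ℝ} (hz : 0 < z) (hzx : z < x)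
    (hzy : z < y) (hxyz : x + y - z < 1) (hp : 0 < hypP k x y z) :
    0 < hypG k r x y z := by
  have hq := hypQ_pos k hk
  have h1 : 0 < x - z := by linarith
  have h2 : 0 < y - z := by linarith
  have h3 : 0 < 1 - x - y + z := by linarith
  rw [hypG]
  have hnum : 0 < (hypP k x y z / (1 - (2 : ℝ) ^ (1 - (k : ℝ))) ^ 2) ^ r :=
    rpow_pos_of_pos (by positivity) r
  have hden : 0 < 4 * z ^ z * (x - z) ^ (x - z) * (y - z) ^ (y - z) *
      (1 - x - y + z) ^ (1 - x - y + z) := by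
    have := rpow_pos_of_pos hz z
    have := rpow_pos_of_pos h1 (x - z)
    have := rpow_pos_of_pos h2 (y - z)
    have := rpow_pos_of_pos h3 (1 - x - y + z)
    positivity
  positivity

lemma hypG_log (k : ℕ) (hk : 3 ≤ k) (r : ℝ) {x y z : ℝ} (hz : 0 < z) (hzx : z < x)
    (hzy : z < y) (hxyz : x + y - z < 1) (hp : 0 < hypP k x y z) :
    Real.log (hypG k r x y z)
      = r * (Real.log (hypP k x y z) - Real.log ((1 - (2 : ℝ) ^ (1 - (k : ℝ))) ^ 2))
        - (Real.log 4 + (z * Real.log z + (x - z) * Real.log (x - z)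
            + (y - z) * Real.log (y - z) + (1 - x - y + z) * Real.log (1 - x - y + z))) := by
  have hq := hypQ_pos k hk
  have h1 : 0 < x - z := by linarith
  have h2 : 0 < y - z := by linarith
  have h3 : 0 < 1 - x - y + z := by linarith
  have hzz := rpow_pos_of_pos hz z
  have hxx := rpow_pos_of_pos h1 (x - z)
  have hyy := rpow_pos_of_pos h2 (y - z)
  have hdd := rpow_pos_of_pos h3 (1 - x - y + z)
  rw [hypG, Real.log_div (by positivity) (by positivity),
    Real.log_rpow (by positivity),
    Real.log_div (ne_of_gt hp) (by positivity),
    Real.log_mul (by positivity) (ne_of_gt hdd),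
    Real.log_mul (by positivity) (ne_of_gt hyy),
    Real.log_mul (by positivity) (ne_of_gt hxx),
    Real.log_mul (by norm_num) (ne_of_gt hzz),
    Real.log_rpow hz, Real.log_rpow h1, Real.log_rpow h2, Real.log_rpow h3]
  ring

lemma key_eq (k : ℕ) (hk : 3 ≤ k) (r : ℝ) (hr : 0 < r) (α β γ : ℝ)
    (h1 : 0 < γ) (h2 : γ < α) (h3 : γ < β) (h4 : α + β - γ < 1)
    (hextr : IsLocalExtr (fun x : ℝ × ℝ × ℝ => hypG k r x.1 x.2.1 x.2.2) (α, β, γ))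
    (v₁ v₂ v₃ : ℝ) :
    r * ((k : ℝ) * (v₁ * (1 - α) ^ (k - 1) - v₁ * α ^ (k - 1) + v₂ * (1 - β) ^ (k - 1)
        - v₂ * β ^ (k - 1) + v₃ * γ ^ (k - 1) + (v₁ - v₃) * (α - γ) ^ (k - 1)
        + (v₂ - v₃) * (β - γ) ^ (k - 1)
        + (v₃ - v₁ - v₂) * (1 - α - β + γ) ^ (k - 1)))
      = hypP k α β γ * (v₃ * Real.log γ + (v₁ - v₃) * Real.log (α - γ)
          + (v₂ - v₃) * Real.log (β - γ) + (v₃ - v₁ - v₂) * Real.log (1 - α - β + γ)) := by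
  have hp : 0 < hypP k α β γ := hypP_pos k hk h1 h2 h3 h4
  have ha : 0 < α - γ := by linarith
  have hb : 0 < β - γ := by linarith
  have hd : 0 < 1 - α - β + γ := by linarith
  set g : ℝ → ℝ × ℝ × ℝ := fun s => (α + v₁ * s, β + v₂ * s, γ + v₃ * s) with hg_def
  have hgc : Continuous g := by fun_prop
  have hg0 : g 0 = (α, β, γ) := by simp [hg_def]
  have hextr2 : IsLocalExtr (fun x : ℝ × ℝ × ℝ => hypG k r x.1 x.2.1 x.2.2) (g 0) := by
    rw [hg0]; exact hextr
  have hφex : IsLocalExtr ((fun x : ℝ × ℝ × ℝ => hypG k r x.1 x.2.1 x.2.2) ∘ g) 0 :=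
    hextr2.comp_tendsto hgc.continuousAt
  -- derivative of the hypP part
  have hA : HasDerivAt (fun s : ℝ => α + v₁ * s) v₁ 0 := by
    simpa using ((hasDerivAt_id (0:ℝ)).const_mul v₁).const_add α
  have hB : HasDerivAt (fun s : ℝ => β + v₂ * s) v₂ 0 := by
    simpa using ((hasDerivAt_id (0:ℝ)).const_mul v₂).const_add β
  have hC : HasDerivAt (fun s : ℝ => γ + v₃ * s) v₃ 0 := by
    simpa using ((hasDerivAt_id (0:ℝ)).const_mul v₃).const_add γ
  set P' : ℝ := (k : ℝ) * (v₁ * (1 - α) ^ (k - 1) - v₁ * α ^ (k - 1) + v₂ * (1 - β) ^ (k - 1)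
        - v₂ * β ^ (k - 1) + v₃ * γ ^ (k - 1) + (v₁ - v₃) * (α - γ) ^ (k - 1)
        + (v₂ - v₃) * (β - γ) ^ (k - 1)
        + (v₃ - v₁ - v₂) * (1 - α - β + γ) ^ (k - 1)) with hP'_def
  have hPd : HasDerivAt (fun s => hypP k (α + v₁ * s) (β + v₂ * s) (γ + v₃ * s)) P' 0 := by
    have big := ((((((((hA.pow k).const_sub 1).sub ((hA.const_sub 1).pow k)).sub
        (hB.pow k)).sub ((hB.const_sub 1).pow k)).add (hC.pow k)).add
        ((hA.sub hC).pow k)).add ((hB.sub hC).pow k)).add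
        ((((hA.const_sub 1).sub hB).add hC).pow k)
    simp only [hypP]
    refine big.congr_deriv ?_
    norm_num [hP'_def]
    ring
  have hP0 : (fun s => hypP k (α + v₁ * s) (β + v₂ * s) (γ + v₃ * s)) 0 = hypP k α β γ := by
    norm_num
  -- eventual membership in the domain
  have e1 : ∀ᶠ s in 𝓝 (0:ℝ), 0 < γ + v₃ * s := by
    have := ContinuousAt.eventually_lt (f := fun _ : ℝ => (0:ℝ))
      (g := fun s => γ + v₃ * s) (x₀ := 0) (by fun_prop) (by fun_prop) (by norm_num [h1])
    simpa using this
  have e2 : ∀ᶠ s in 𝓝 (0:ℝ), γ + v₃ * s < α + v₁ * s := by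
    have := ContinuousAt.eventually_lt (f := fun s : ℝ => γ + v₃ * s)
      (g := fun s => α + v₁ * s) (x₀ := 0) (by fun_prop) (by fun_prop) (by norm_num [h2])
    simpa using this
  have e3 : ∀ᶠ s in 𝓝 (0:ℝ), γ + v₃ * s < β + v₂ * s := by
    have := ContinuousAt.eventually_lt (f := fun s : ℝ => γ + v₃ * s)
      (g := fun s => β + v₂ * s) (x₀ := 0) (by fun_prop) (by fun_prop) (by norm_num [h3])
    simpa using this
  have e4 : ∀ᶠ s in 𝓝 (0:ℝ), (α + v₁ * s) + (β + v₂ * s) - (γ + v₃ * s) < 1 := by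
    have := ContinuousAt.eventually_lt (f := fun s : ℝ => (α + v₁ * s) + (β + v₂ * s) - (γ + v₃ * s))
      (g := fun _ => (1:ℝ)) (x₀ := 0) (by fun_prop) (by fun_prop) (by norm_num [h4])
    simpa using this
  have e5 : ∀ᶠ s in 𝓝 (0:ℝ), 0 < hypP k (α + v₁ * s) (β + v₂ * s) (γ + v₃ * s) := by
    have := ContinuousAt.eventually_lt (f := fun _ : ℝ => (0:ℝ))
      (g := fun s => hypP k (α + v₁ * s) (β + v₂ * s) (γ + v₃ * s)) (x₀ := 0)
      (by fun_prop) (hPd.continuousAt) (by simpa using hp)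
    simpa using this
  have hev := ((((e1.and e2).and e3).and e4).and e5)
  -- ψ = log ∘ hypG along the line
  set Q2 : ℝ := (1 - (2 : ℝ) ^ (1 - (k : ℝ))) ^ 2 with hQ2_def
  set ψ : ℝ → ℝ := fun s =>
    r * (Real.log (hypP k (α + v₁ * s) (β + v₂ * s) (γ + v₃ * s)) - Real.log Q2)
      - (Real.log 4 + ((γ + v₃ * s) * Real.log (γ + v₃ * s)
          + ((α + v₁ * s) - (γ + v₃ * s)) * Real.log ((α + v₁ * s) - (γ + v₃ * s))
          + ((β + v₂ * s) - (γ + v₃ * s)) * Real.log ((β + v₂ * s) - (γ + v₃ * s))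
          + (1 - (α + v₁ * s) - (β + v₂ * s) + (γ + v₃ * s))
              * Real.log (1 - (α + v₁ * s) - (β + v₂ * s) + (γ + v₃ * s)))) with hψ_def
  set Wc : ℝ := r * (P' / hypP k α β γ)
      - (v₃ * Real.log γ + v₃ + ((v₁ - v₃) * Real.log (α - γ) + (v₁ - v₃))
          + ((v₂ - v₃) * Real.log (β - γ) + (v₂ - v₃))
          + ((v₃ - v₁ - v₂) * Real.log (1 - α - β + γ) + (v₃ - v₁ - v₂))) with hWc_def
  have hψd : HasDerivAt ψ Wc 0 := by
    have hPne : (fun s => hypP k (α + v₁ * s) (β + v₂ * s) (γ + v₃ * s)) 0 ≠ 0 := by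
      rw [hP0]; exact ne_of_gt hp
    have hCne : (fun s : ℝ => γ + v₃ * s) 0 ≠ 0 := by norm_num; linarith
    have hane : (fun s : ℝ => (α + v₁ * s) - (γ + v₃ * s)) 0 ≠ 0 := by norm_num; linarith
    have hbne : (fun s : ℝ => (β + v₂ * s) - (γ + v₃ * s)) 0 ≠ 0 := by norm_num; linarith
    have hdne : (fun s : ℝ => 1 - (α + v₁ * s) - (β + v₂ * s) + (γ + v₃ * s)) 0 ≠ 0 := by
      norm_num; linarith
    have term1 := ((hPd.log hPne).sub_const (Real.log Q2)).const_mul r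
    have cc := hC.mul (hC.log hCne)
    have aa := (hA.sub hC).mul ((hA.sub hC).log hane)
    have bb := (hB.sub hC).mul ((hB.sub hC).log hbne)
    have dd := (((hA.const_sub 1).sub hB).add hC).mul
      ((((hA.const_sub 1).sub hB).add hC).log hdne)
    have sum := (((cc.add aa).add bb).add dd).const_add (Real.log 4)
    have big := term1.sub sum
    rw [hψ_def, hWc_def]
    refine big.congr_deriv ?_
    norm_num
    field_simp
    ring
  -- transfer to hypG along the line and conclude the derivative vanishes
  set φ : ℝ → ℝ := fun s => hypG k r (α + v₁ * s) (β + v₂ * s) (γ + v₃ * s) with hφ_def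
  have heq : φ =ᶠ[𝓝 (0:ℝ)] fun s => Real.exp (ψ s) := by
    filter_upwards [hev] with s hs
    obtain ⟨⟨⟨⟨c1, c2⟩, c3⟩, c4⟩, c5⟩ := hs
    have hlog := hypG_log k hk r c1 c2 c3 c4 c5
    have hpos := hypG_pos k hk r c1 c2 c3 c4 c5
    rw [hφ_def]
    simp only
    rw [← Real.exp_log hpos, hlog]
  have hφd : HasDerivAt φ (Real.exp (ψ 0) * Wc) 0 := (hψd.exp).congr_of_eventuallyEq heq
  have hzero : Real.exp (ψ 0) * Wc = 0 := by
    apply hφex.hasDerivAt_eq_zero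
    exact hφd
  have hWc0 : Wc = 0 := by
    rcases mul_eq_zero.1 hzero with h | h
    · exact absurd h (Real.exp_ne_zero _)
    · exact h
  -- extract the key equation
  rw [hWc_def] at hWc0
  have hkey : r * (P' / hypP k α β γ)
      = v₃ * Real.log γ + (v₁ - v₃) * Real.log (α - γ)
        + (v₂ - v₃) * Real.log (β - γ) + (v₃ - v₁ - v₂) * Real.log (1 - α - β + γ) := by
    linarith
  rw [mul_div_assoc'] at hkey
  rw [div_eq_iff (ne_of_gt hp)] at hkey
  linarith [hkey]

/-- Lemma 6 of the paper: for k ≥ 3 and r > 0, every local extremum of g_r in the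
interior of its domain {(α,β,γ) : 0 < γ < min(α,β), α + β − γ < 1} has α = β = 1/2. -/
theorem hypG_local_extr (k : ℕ) (hk : 3 ≤ k) (r : ℝ) (hr : 0 < r) (α β γ : ℝ)
    (h1 : 0 < γ) (h2 : γ < α) (h3 : γ < β) (h4 : α + β - γ < 1)
    (hextr : IsLocalExtr (fun x : ℝ × ℝ × ℝ => hypG k r x.1 x.2.1 x.2.2) (α, β, γ)) :
    α = 1 / 2 ∧ β = 1 / 2 := by
  have hp : 0 < hypP k α β γ := hypP_pos k hk h1 h2 h3 h4
  have hk1 : k - 1 ≠ 0 := by omega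
  have hkpos : (0 : ℝ) < (k : ℝ) := by positivity
  have ha : 0 < α - γ := by linarith
  have hb : 0 < β - γ := by linarith
  have hd : 0 < 1 - α - β + γ := by linarith
  -- Step A : α + β = 1
  have S1 := key_eq k hk r hr α β γ h1 h2 h3 h4 hextr (-1) (-1) (-1)
  have S1' : r * ((k : ℝ) * (α ^ (k-1) - (1-α) ^ (k-1) + β ^ (k-1) - (1-β) ^ (k-1)
      - γ ^ (k-1) + (1-α-β+γ) ^ (k-1)))
      = hypP k α β γ * (Real.log (1-α-β+γ) - Real.log γ) := by linear_combination S1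
  have hab : α + β = 1 := by
    rcases lt_trichotomy (α + β) 1 with hlt | heq | hgt
    · exfalso
      have hγd : γ < 1 - α - β + γ := by linarith
      have hlog : Real.log γ < Real.log (1-α-β+γ) := Real.log_lt_log h1 hγd
      have hp1 : α ^ (k-1) < (1-β) ^ (k-1) :=
        pow_lt_pow_left₀ (by linarith) (by linarith) hk1
      have hp2 := aux_pow_mono (k-1) (x := β - γ) (y := γ) (z := 1-α-β+γ)
        (by linarith) (by linarith) (by linarith)
      rw [show (β - γ) + (1-α-β+γ) = 1-α by ring, show (β - γ) + γ = β by ring] at hp2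
      have hEneg : α ^ (k-1) - (1-α) ^ (k-1) + β ^ (k-1) - (1-β) ^ (k-1)
          - γ ^ (k-1) + (1-α-β+γ) ^ (k-1) < 0 := by linarith
      have hLHS : r * ((k : ℝ) * (α ^ (k-1) - (1-α) ^ (k-1) + β ^ (k-1) - (1-β) ^ (k-1)
          - γ ^ (k-1) + (1-α-β+γ) ^ (k-1))) < 0 :=
        mul_neg_of_pos_of_neg hr (mul_neg_of_pos_of_neg hkpos hEneg)
      have hRHS : 0 < hypP k α β γ * (Real.log (1-α-β+γ) - Real.log γ) :=
        mul_pos hp (by linarith)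
      linarith
    · exact heq
    · exfalso
      have hγd : 1 - α - β + γ < γ := by linarith
      have hlog : Real.log (1-α-β+γ) < Real.log γ := Real.log_lt_log hd hγd
      have hp1 : (1-β) ^ (k-1) < α ^ (k-1) :=
        pow_lt_pow_left₀ (by linarith) (by linarith) hk1
      have hp2 := aux_pow_mono (k-1) (x := β - γ) (y := 1-α-β+γ) (z := γ)
        (by linarith) (by linarith) (by linarith)
      rw [show (β - γ) + γ = β by ring, show (β - γ) + (1-α-β+γ) = 1-α by ring] at hp2
      have hEpos : 0 < α ^ (k-1) - (1-α) ^ (k-1) + β ^ (k-1) - (1-β) ^ (k-1)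
          - γ ^ (k-1) + (1-α-β+γ) ^ (k-1) := by linarith
      have hLHS : 0 < r * ((k : ℝ) * (α ^ (k-1) - (1-α) ^ (k-1) + β ^ (k-1) - (1-β) ^ (k-1)
          - γ ^ (k-1) + (1-α-β+γ) ^ (k-1))) := mul_pos hr (mul_pos hkpos hEpos)
      have hRHS : hypP k α β γ * (Real.log (1-α-β+γ) - Real.log γ) < 0 :=
        mul_neg_of_pos_of_neg hp (by linarith)
      linarith
  -- Step B : α = β
  have S2 := key_eq k hk r hr α β γ h1 h2 h3 h4 hextr (-1) 1 0
  have S2' : r * ((k : ℝ) * (α ^ (k-1) - (1-α) ^ (k-1) + (1-β) ^ (k-1) - β ^ (k-1)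
      - (α-γ) ^ (k-1) + (β-γ) ^ (k-1)))
      = hypP k α β γ * (Real.log (β-γ) - Real.log (α-γ)) := by linear_combination S2
  have e1 : 1 - α = β := by linarith
  have e2 : 1 - β = α := by linarith
  rw [e1, e2] at S2'
  have hae : α = β := by
    rcases lt_trichotomy α β with hlt | heq | hgt
    · exfalso
      have hlog : Real.log (α-γ) < Real.log (β-γ) := Real.log_lt_log ha (by linarith)
      have hq1 : α ^ (k-1) < β ^ (k-1) := pow_lt_pow_left₀ hlt (by linarith) hk1
      have hq2 := aux_pow_mono (k-1) (x := γ) (y := α - γ) (z := β - γ)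
        (by linarith) (by linarith) (by linarith)
      rw [show γ + (β - γ) = β by ring, show γ + (α - γ) = α by ring] at hq2
      have hEneg : α ^ (k-1) - β ^ (k-1) + α ^ (k-1) - β ^ (k-1)
          - (α-γ) ^ (k-1) + (β-γ) ^ (k-1) < 0 := by linarith
      have hLHS : r * ((k : ℝ) * (α ^ (k-1) - β ^ (k-1) + α ^ (k-1) - β ^ (k-1)
          - (α-γ) ^ (k-1) + (β-γ) ^ (k-1))) < 0 :=
        mul_neg_of_pos_of_neg hr (mul_neg_of_pos_of_neg hkpos hEneg)
      have hRHS : 0 < hypP k α β γ * (Real.log (β-γ) - Real.log (α-γ)) :=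
        mul_pos hp (by linarith)
      linarith
    · exact heq
    · exfalso
      have hlog : Real.log (β-γ) < Real.log (α-γ) := Real.log_lt_log hb (by linarith)
      have hq1 : β ^ (k-1) < α ^ (k-1) := pow_lt_pow_left₀ hgt (by linarith) hk1
      have hq2 := aux_pow_mono (k-1) (x := γ) (y := β - γ) (z := α - γ)
        (by linarith) (by linarith) (by linarith)
      rw [show γ + (β - γ) = β by ring, show γ + (α - γ) = α by ring] at hq2
      have hEpos : 0 < α ^ (k-1) - β ^ (k-1) + α ^ (k-1) - β ^ (k-1)
          - (α-γ) ^ (k-1) + (β-γ) ^ (k-1) := by linarith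
      have hLHS : 0 < r * ((k : ℝ) * (α ^ (k-1) - β ^ (k-1) + α ^ (k-1) - β ^ (k-1)
          - (α-γ) ^ (k-1) + (β-γ) ^ (k-1))) := mul_pos hr (mul_pos hkpos hEpos)
      have hRHS : hypP k α β γ * (Real.log (β-γ) - Real.log (α-γ)) < 0 :=
        mul_neg_of_pos_of_neg hp (by linarith)
      linarith
  exact ⟨by linarith, by linarith⟩

end Aux
end

section
/- Fix an integer k ≥ 2 and a real r > 0, and set q = 1 − 2^{1−k}. The function g(α) = (1 − α^k − (1−α)^k)^r / (α^α (1−α)^{1−α}) on [0,1] (with 0^0 = 1) attains its unique maximum at α = 1/2, where g(1/2) = 2 q^r; moreover its second derivative at 1/2 satisfies g''(1/2) = −8 (1−2^{1−k})^{r−1} (1 + 2^{1−k}(k(k−1)r − 1)) < 0. -/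
open Real Filter Set Topology

noncomputable def fmrfF (k : ℕ) (α : ℝ) : ℝ := 1 - α ^ k - (1 - α) ^ k
noncomputable def fmrfF' (k : ℕ) (α : ℝ) : ℝ :=
  (k : ℝ) * (1 - α) ^ (k - 1) - (k : ℝ) * α ^ (k - 1)
noncomputable def fmrfF'' (k : ℕ) (α : ℝ) : ℝ :=
  -((k : ℝ) * ((k : ℝ) - 1) * α ^ (k - 2)) - (k : ℝ) * ((k : ℝ) - 1) * (1 - α) ^ (k - 2)

noncomputable def fmrfPhi (k : ℕ) (r α : ℝ) : ℝ :=
  r * Real.log (fmrfF k α) - α * Real.log α - (1 - α) * Real.log (1 - α)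
noncomputable def fmrfPhi' (k : ℕ) (r α : ℝ) : ℝ :=
  r * (fmrfF' k α / fmrfF k α) - Real.log α + Real.log (1 - α)
noncomputable def fmrfPhi'' (k : ℕ) (r α : ℝ) : ℝ :=
  r * ((fmrfF'' k α * fmrfF k α - fmrfF' k α * fmrfF' k α) / (fmrfF k α) ^ 2)
    - α⁻¹ - (1 - α)⁻¹

lemma fmrf_hasDerivAt_F (k : ℕ) (α : ℝ) : HasDerivAt (fmrfF k) (fmrfF' k α) α := by
  have h2 : HasDerivAt (fun x : ℝ => (1 - x) ^ k) ((k : ℝ) * (1 - α) ^ (k - 1) * (-1)) α :=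
    (hasDerivAt_pow k (1 - α)).comp α ((hasDerivAt_id α).const_sub 1)
  have := ((hasDerivAt_const α (1 : ℝ)).sub (hasDerivAt_pow k α)).sub h2
  refine this.congr_deriv ?_
  unfold fmrfF'; ring

lemma fmrf_hasDerivAt_F' (k : ℕ) (hk : 2 ≤ k) (α : ℝ) :
    HasDerivAt (fmrfF' k) (fmrfF'' k α) α := by
  have h2 : HasDerivAt (fun x : ℝ => (1 - x) ^ (k - 1))
      (((k - 1 : ℕ) : ℝ) * (1 - α) ^ (k - 1 - 1) * (-1)) α :=
    (hasDerivAt_pow (k - 1) (1 - α)).comp α ((hasDerivAt_id α).const_sub 1)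
  have := (h2.const_mul (k : ℝ)).sub ((hasDerivAt_pow (k - 1) α).const_mul (k : ℝ))
  refine this.congr_deriv ?_
  unfold fmrfF''
  have hc : ((k - 1 : ℕ) : ℝ) = (k : ℝ) - 1 := by
    push_cast [Nat.cast_sub (by omega : 1 ≤ k)]; ring
  rw [Nat.sub_sub, hc]; ring

lemma fmrf_F_pos (k : ℕ) (hk : 2 ≤ k) {α : ℝ} (h : α ∈ Ioo (0 : ℝ) 1) :
    0 < fmrfF k α := by
  obtain ⟨h0, h1⟩ := h
  have ha : α ^ k < α ^ 1 := pow_lt_pow_right_of_lt_one₀ h0 h1 (by omega)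
  have hb : (1 - α) ^ k < (1 - α) ^ 1 :=
    pow_lt_pow_right_of_lt_one₀ (by linarith) (by linarith) (by omega)
  simp only [pow_one] at ha hb
  unfold fmrfF; linarith

lemma fmrf_hasDerivAt_phi (k : ℕ) (hk : 2 ≤ k) (r : ℝ) {α : ℝ} (h : α ∈ Ioo (0 : ℝ) 1) :
    HasDerivAt (fmrfPhi k r) (fmrfPhi' k r α) α := by
  have hfa := fmrf_F_pos k hk h
  have h1 : HasDerivAt (fun α => Real.log (fmrfF k α)) (fmrfF' k α / fmrfF k α) α :=
    (fmrf_hasDerivAt_F k α).log hfa.ne'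
  have h2 : HasDerivAt (fun x : ℝ => x * Real.log x) (Real.log α + 1) α :=
    Real.hasDerivAt_mul_log h.1.ne'
  have h3 : HasDerivAt (fun x : ℝ => (1 - x) * Real.log (1 - x))
      ((Real.log (1 - α) + 1) * (-1)) α :=
    (Real.hasDerivAt_mul_log (by linarith [h.2] : (1 : ℝ) - α ≠ 0)).comp α
      ((hasDerivAt_id α).const_sub 1)
  have := ((h1.const_mul r).sub h2).sub h3
  refine this.congr_deriv ?_
  unfold fmrfPhi'; ring

lemma fmrf_hasDerivAt_phi' (k : ℕ) (hk : 2 ≤ k) (r : ℝ) {α : ℝ} (h : α ∈ Ioo (0 : ℝ) 1) :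
    HasDerivAt (fmrfPhi' k r) (fmrfPhi'' k r α) α := by
  have hfa := fmrf_F_pos k hk h
  have h1 : HasDerivAt (fun α => fmrfF' k α / fmrfF k α)
      ((fmrfF'' k α * fmrfF k α - fmrfF' k α * fmrfF' k α) / (fmrfF k α) ^ 2) α :=
    (fmrf_hasDerivAt_F' k hk α).div (fmrf_hasDerivAt_F k α) hfa.ne'
  have h2 : HasDerivAt Real.log α⁻¹ α := Real.hasDerivAt_log h.1.ne'
  have h3 : HasDerivAt (fun x : ℝ => Real.log (1 - x)) ((1 - α)⁻¹ * (-1)) α :=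
    (Real.hasDerivAt_log (by linarith [h.2] : (1 : ℝ) - α ≠ 0)).comp α
      ((hasDerivAt_id α).const_sub 1)
  have := ((h1.const_mul r).sub h2).add h3
  refine this.congr_deriv ?_
  unfold fmrfPhi''; ring

/-- First moment rate function: for k ≥ 2 and r > 0, with q = 1 − 2^{1−k}, the function
g(α) = (1 − α^k − (1−α)^k)^r / (α^α (1−α)^{1−α}) on [0,1] (with 0^0 = 1, satisfied by
`Real.rpow`) has its unique maximum at α = 1/2, where g(1/2) = 2 q^r; moreover
g''(1/2) = −8 (1−2^{1−k})^{r−1} (1 + 2^{1−k}(k(k−1)r − 1)) < 0. -/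
theorem first_moment_rate_function (k : ℕ) (hk : 2 ≤ k) (r : ℝ) (hr : 0 < r) (q : ℝ)
    (hq : q = 1 - (2 : ℝ) ^ (1 - (k : ℝ)))
    (g : ℝ → ℝ)
    (hg : ∀ α : ℝ, g α = (1 - α ^ k - (1 - α) ^ k) ^ r / (α ^ α * (1 - α) ^ (1 - α))) :
    g (1 / 2) = 2 * q ^ r ∧
    (∀ α ∈ Set.Icc (0 : ℝ) 1, α ≠ 1 / 2 → g α < g (1 / 2)) ∧
    deriv (deriv g) (1 / 2) =
      -8 * (1 - (2 : ℝ) ^ (1 - (k : ℝ))) ^ (r - 1) *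
        (1 + (2 : ℝ) ^ (1 - (k : ℝ)) * ((k : ℝ) * ((k : ℝ) - 1) * r - 1)) ∧
    deriv (deriv g) (1 / 2) < 0 := by
  set t : ℝ := (1 / 2 : ℝ) ^ k with ht_def
  have ht0 : 0 < t := by positivity
  have ht4 : t ≤ 1 / 4 := by
    have : (1 / 2 : ℝ) ^ k ≤ (1 / 2 : ℝ) ^ 2 :=
      pow_le_pow_of_le_one (by norm_num) (by norm_num) hk
    norm_num at this; simpa [ht_def] using this
  have h2k : (2 : ℝ) ^ (1 - (k : ℝ)) = 2 * t := by
    rw [show (1 : ℝ) - (k : ℝ) = 1 + (-(k : ℝ)) by ring, Real.rpow_add two_pos,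
      Real.rpow_one, Real.rpow_neg (by norm_num : (0:ℝ) ≤ 2), Real.rpow_natCast]
    rw [ht_def, div_pow, one_pow]
    ring
  have hq2t : q = 1 - 2 * t := by rw [hq, h2k]
  have hq0 : 0 < q := by rw [hq2t]; linarith
  have half1 : (1 : ℝ) - 1 / 2 = 1 / 2 := by norm_num
  -- values at 1/2
  have hFh : fmrfF k (1 / 2) = q := by
    unfold fmrfF; rw [half1, hq2t, ht_def]; ring
  have hF'h : fmrfF' k (1 / 2) = 0 := by
    unfold fmrfF'; rw [half1]; ring
  have hk2 : ((1 : ℝ) / 2) ^ (k - 2) = 4 * t := by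
    have hkk : k = (k - 2) + 2 := by omega
    have : t = ((1 : ℝ) / 2) ^ (k - 2) * (1 / 4) := by
      rw [ht_def]; conv_lhs => rw [hkk]
      rw [pow_add]; norm_num
    rw [this]; ring
  have hF''h : fmrfF'' k (1 / 2) = -8 * ((k : ℝ) * ((k : ℝ) - 1)) * t := by
    unfold fmrfF''; rw [half1, hk2]; ring
  -- g = exp ∘ phi on Ioo 0 1
  have hg_eq : ∀ α ∈ Ioo (0 : ℝ) 1, g α = Real.exp (fmrfPhi k r α) := by
    intro α hα
    have h1α : (0 : ℝ) < 1 - α := by linarith [hα.2]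
    rw [hg, show (1 : ℝ) - α ^ k - (1 - α) ^ k = fmrfF k α from rfl,
      Real.rpow_def_of_pos (fmrf_F_pos k hk hα), Real.rpow_def_of_pos hα.1,
      Real.rpow_def_of_pos h1α, ← Real.exp_add, ← Real.exp_sub]
    congr 1
    unfold fmrfPhi; ring
  -- value of g at 1/2
  have hval : g (1 / 2) = 2 * q ^ r := by
    rw [hg, half1]
    rw [show (1 : ℝ) - (1/2:ℝ) ^ k - (1/2:ℝ) ^ k = q by rw [hq2t, ht_def]; ring]
    rw [← Real.rpow_add (by norm_num : (0:ℝ) < 1/2)]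
    norm_num
    ring
  refine ⟨hval, ?_, ?_⟩
  · -- uniqueness of maximum
    intro α hα hne
    rw [hval]
    have hqr : 0 < q ^ r := Real.rpow_pos_of_pos hq0 r
    have hqr' := Real.rpow_pos_of_pos hq0 r
    rcases eq_or_lt_of_le hα.1 with h0 | h0
    · have hg0 : g α = 0 := by
        rw [hg, ← h0]
        norm_num [zero_pow (by omega : k ≠ 0), Real.zero_rpow hr.ne']
      rw [hg0]; linarith
    rcases eq_or_lt_of_le hα.2 with h1 | h1
    · have hg0 : g α = 0 := by
        rw [hg, h1]
        norm_num [zero_pow (by omega : k ≠ 0), Real.zero_rpow hr.ne']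
      rw [hg0]; linarith
    have hIoo : α ∈ Ioo (0 : ℝ) 1 := ⟨h0, h1⟩
    have h1α : (0 : ℝ) < 1 - α := by linarith
    have hFpos := fmrf_F_pos k hk hIoo
    -- F ≤ q by convexity of x^k
    have hFle : fmrfF k α ≤ q := by
      have hc := (convexOn_pow k).2 (mem_Ici.2 h0.le) (mem_Ici.2 h1α.le)
        (by norm_num : (0:ℝ) ≤ 1/2) (by norm_num : (0:ℝ) ≤ 1/2) (by norm_num)
      simp only [smul_eq_mul] at hc
      rw [show (1/2 : ℝ) * α + (1/2 : ℝ) * (1 - α) = 1/2 by ring] at hc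
      rw [hq2t]
      unfold fmrfF
      rw [ht_def]
      linarith
    have hnum : fmrfF k α ^ r ≤ q ^ r := Real.rpow_le_rpow hFpos.le hFle hr.le
    -- denominator > 1/2 by strict convexity of x log x
    have hDgt : (1 / 2 : ℝ) < α ^ α * (1 - α) ^ (1 - α) := by
      have hane : α ≠ 1 - α := fun h => hne (by linarith)
      have hsc := Real.strictConvexOn_mul_log.2 (mem_Ici.2 h0.le) (mem_Ici.2 h1α.le)
        hane (by norm_num : (0:ℝ) < 1/2) (by norm_num : (0:ℝ) < 1/2) (by norm_num)
      simp only [smul_eq_mul] at hsc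
      rw [show (1/2 : ℝ) * α + (1/2 : ℝ) * (1 - α) = 1/2 by ring] at hsc
      have key : Real.log (1/2) < α * Real.log α + (1 - α) * Real.log (1 - α) := by
        linarith
      calc (1/2 : ℝ) = Real.exp (Real.log (1/2)) := (Real.exp_log (by norm_num)).symm
        _ < Real.exp (α * Real.log α + (1 - α) * Real.log (1 - α)) :=
            Real.exp_lt_exp.2 key
        _ = α ^ α * (1 - α) ^ (1 - α) := by
            rw [Real.rpow_def_of_pos h0, Real.rpow_def_of_pos h1α, ← Real.exp_add]
            congr 1; ring
    have hDpos : (0:ℝ) < α ^ α * (1 - α) ^ (1 - α) := by linarith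
    calc g α = fmrfF k α ^ r / (α ^ α * (1 - α) ^ (1 - α)) := by
          rw [hg]; rfl
      _ ≤ q ^ r / (α ^ α * (1 - α) ^ (1 - α)) := (div_le_div_iff_of_pos_right hDpos).2 hnum
      _ < q ^ r / (1 / 2) := div_lt_div_of_pos_left hqr (by norm_num) hDgt
      _ = 2 * q ^ r := by ring
  · -- second derivative
    have hU : Ioo (0 : ℝ) 1 ∈ 𝓝 (1 / 2 : ℝ) := isOpen_Ioo.mem_nhds (by norm_num)
    have heq : g =ᶠ[𝓝 (1 / 2 : ℝ)] fun α => Real.exp (fmrfPhi k r α) :=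
      eventuallyEq_of_mem hU hg_eq
    have hd2 : deriv g =ᶠ[𝓝 (1 / 2 : ℝ)]
        fun α => Real.exp (fmrfPhi k r α) * fmrfPhi' k r α :=
      heq.deriv.trans (eventuallyEq_of_mem hU fun α hα =>
        ((fmrf_hasDerivAt_phi k hk r hα).exp).deriv)
    have hmem : (1 / 2 : ℝ) ∈ Ioo (0 : ℝ) 1 := by norm_num
    have hder : HasDerivAt (fun α => Real.exp (fmrfPhi k r α) * fmrfPhi' k r α)
        (Real.exp (fmrfPhi k r (1/2)) * fmrfPhi' k r (1/2) * fmrfPhi' k r (1/2)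
          + Real.exp (fmrfPhi k r (1/2)) * fmrfPhi'' k r (1/2)) (1/2) :=
      ((fmrf_hasDerivAt_phi k hk r hmem).exp).mul (fmrf_hasDerivAt_phi' k hk r hmem)
    have hphi'h : fmrfPhi' k r (1/2) = 0 := by
      unfold fmrfPhi'; rw [hF'h, half1]; simp
    have hexph : Real.exp (fmrfPhi k r (1/2)) = 2 * q ^ r := by
      unfold fmrfPhi
      rw [hFh, half1,
        show r * Real.log q - 1/2 * Real.log (1/2) - (1/2 : ℝ) * Real.log (1/2)
          = Real.log q * r - Real.log (1/2) by ring,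
        Real.exp_sub, ← Real.rpow_def_of_pos hq0, Real.exp_log (by norm_num : (0:ℝ) < 1/2)]
      ring
    have hphi''h : fmrfPhi'' k r (1/2)
        = -8 * r * ((k : ℝ) * ((k : ℝ) - 1)) * t / q - 4 := by
      unfold fmrfPhi''
      rw [hFh, hF'h, hF''h, half1]
      field_simp
      ring
    have hDD : deriv (deriv g) (1/2)
        = 2 * q ^ r * (-8 * r * ((k : ℝ) * ((k : ℝ) - 1)) * t / q - 4) := by
      rw [hd2.deriv_eq, hder.deriv, hphi'h, hexph, hphi''h]
      ring
    have hq2t0 : (1 : ℝ) - 2 * t ≠ 0 := by rw [← hq2t]; exact hq0.ne'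
    have hmain : deriv (deriv g) (1/2)
        = -8 * (1 - (2 : ℝ) ^ (1 - (k : ℝ))) ^ (r - 1) *
          (1 + (2 : ℝ) ^ (1 - (k : ℝ)) * ((k : ℝ) * ((k : ℝ) - 1) * r - 1)) := by
      rw [hDD, ← hq, h2k, Real.rpow_sub_one hq0.ne' r, hq2t]
      field_simp
      ring
    refine ⟨hmain, ?_⟩
    rw [hmain]
    have hqr1 : 0 < (1 - (2 : ℝ) ^ (1 - (k : ℝ))) ^ (r - 1) := by
      rw [← hq]; exact Real.rpow_pos_of_pos hq0 _
    have hkr : (2 : ℝ) ≤ (k : ℝ) := by exact_mod_cast hk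
    have hbr : 0 < 1 + (2 : ℝ) ^ (1 - (k : ℝ)) * ((k : ℝ) * ((k : ℝ) - 1) * r - 1) := by
      rw [h2k]
      nlinarith [mul_pos ht0 (mul_pos (by nlinarith : (0:ℝ) < (k:ℝ) * ((k:ℝ) - 1)) hr)]
    nlinarith [mul_pos hqr1 hbr]
end

section
/- Fix an integer k ≥ 3 and a real r > 0. Suppose 0 < α < 1/2 and 0 < γ ≤ α/2, let p = p(α,α,γ), and assume p > 0. Define ψ(α,γ) = −ln γ + ln(1−2α+γ) + (kr/p(α,α,γ))(−2α^{k−1} + 2(1−α)^{k−1} − (1−2α+γ)^{k−1} + γ^{k−1}). Then the partial derivative of ψ with respect to α (with γ held fixed, and p varying with α) is strictly negative; explicitly, ∂ψ/∂α = −2/(1−2α+γ) + (2k(k−1)r/p)(−α^{k−2} − (1−α)^{k−2} + (1−2α+γ)^{k−2}) + (2k²r/p²)(γ^{k−1} − (1−2α+γ)^{k−1} − 2α^{k−1} + 2(1−α)^{k−1})(−(α−γ)^{k−1} + α^{k−1} + (1−2α+γ)^{k−1} − (1−α)^{k−1}) < 0. -/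
open Real

/-- If `0 ≤ b ≤ a`, `a ≤ c`, `b ≤ d` and the gaps `a - b = c - d` agree, then
`a^n - b^n ≤ c^n - d^n`. -/
lemma pow_sub_pow_le_aux (n : ℕ) {a b c d : ℝ} (hb : 0 ≤ b) (hba : b ≤ a)
    (hac : a ≤ c) (hbd : b ≤ d) (hgap : a - b = c - d) :
    a ^ n - b ^ n ≤ c ^ n - d ^ n := by
  have ha : 0 ≤ a := hb.trans hba
  have hc : 0 ≤ c := ha.trans hac
  rw [← geom_sum₂_mul a b n, ← geom_sum₂_mul c d n, ← hgap]
  apply mul_le_mul_of_nonneg_right _ (by linarith)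
  apply Finset.sum_le_sum
  intro i _
  exact mul_le_mul (pow_le_pow_left₀ ha hac i) (pow_le_pow_left₀ hb hbd _)
    (pow_nonneg hb _) (pow_nonneg hc _)

/-- For k ≥ 3, r > 0, 0 < α < 1/2, 0 < γ ≤ α/2 and p(α,α,γ) > 0, the function
ψ(a) = −ln γ + ln(1−2a+γ) + (kr/p(a,a,γ))(−2a^{k−1} + 2(1−a)^{k−1} − (1−2a+γ)^{k−1} + γ^{k−1})
has derivative at a = α equal to
−2/(1−2α+γ) + (2k(k−1)r/p)(−α^{k−2} − (1−α)^{k−2} + (1−2α+γ)^{k−2})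
+ (2k²r/p²)(γ^{k−1} − (1−2α+γ)^{k−1} − 2α^{k−1} + 2(1−α)^{k−1})
    (−(α−γ)^{k−1} + α^{k−1} + (1−2α+γ)^{k−1} − (1−α)^{k−1}),
and this derivative is strictly negative. -/
theorem psi_derivative_negative (k : ℕ) (hk : 3 ≤ k) (r α γ : ℝ) (hr : 0 < r)
    (hα0 : 0 < α) (hα : α < 1 / 2) (hγ0 : 0 < γ) (hγ : γ ≤ α / 2)
    (hp : 0 < hypP k α α γ)
    (ψ : ℝ → ℝ)
    (hψ : ∀ a : ℝ, ψ a = -Real.log γ + Real.log (1 - 2 * a + γ) +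
      (k : ℝ) * r / hypP k a a γ *
        (-2 * a ^ (k - 1) + 2 * (1 - a) ^ (k - 1) - (1 - 2 * a + γ) ^ (k - 1)
          + γ ^ (k - 1))) :
    deriv ψ α =
      -2 / (1 - 2 * α + γ) +
      2 * (k : ℝ) * ((k : ℝ) - 1) * r / hypP k α α γ *
        (-α ^ (k - 2) - (1 - α) ^ (k - 2) + (1 - 2 * α + γ) ^ (k - 2)) +
      2 * (k : ℝ) ^ 2 * r / (hypP k α α γ) ^ 2 *
        (γ ^ (k - 1) - (1 - 2 * α + γ) ^ (k - 1) - 2 * α ^ (k - 1)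
          + 2 * (1 - α) ^ (k - 1)) *
        (-(α - γ) ^ (k - 1) + α ^ (k - 1) + (1 - 2 * α + γ) ^ (k - 1)
          - (1 - α) ^ (k - 1)) ∧
    deriv ψ α < 0 := by
  have hc0 : (0:ℝ) < 1 - 2 * α + γ := by linarith
  have hPne : hypP k α α γ ≠ 0 := ne_of_gt hp
  have hk1 : 1 ≤ k := by omega
  have hkcast : ((k - 1 : ℕ) : ℝ) = (k : ℝ) - 1 := by
    rw [Nat.cast_sub hk1]; norm_num
  have hk3 : (3:ℝ) ≤ (k:ℝ) := by exact_mod_cast hk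
  -- derivative of the inner linear function
  have hL : HasDerivAt (fun a : ℝ => 1 - 2 * a + γ) (-2) α := by
    have := (((hasDerivAt_id α).const_mul (2:ℝ)).const_sub 1).add_const γ
    simpa using this
  have hlog : HasDerivAt (fun a : ℝ => Real.log (1 - 2 * a + γ))
      (-2 / (1 - 2 * α + γ)) α := by
    have := hL.log (ne_of_gt hc0)
    simpa using this
  -- derivative of p
  have hP : HasDerivAt (fun a : ℝ => hypP k a a γ)
      (2 * (k:ℝ) * ((1 - α) ^ (k - 1) + (α - γ) ^ (k - 1) - α ^ (k - 1)
        - (1 - 2 * α + γ) ^ (k - 1))) α := by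
    have h1 := hasDerivAt_pow k α
    have h2 : HasDerivAt (fun a : ℝ => (1 - a) ^ k)
        ((k:ℝ) * (1 - α) ^ (k - 1) * (-1)) α := by
      exact ((hasDerivAt_id α).const_sub 1).pow k
    have h3 : HasDerivAt (fun a : ℝ => (a - γ) ^ k)
        ((k:ℝ) * (α - γ) ^ (k - 1) * 1) α := by
      exact ((hasDerivAt_id α).sub_const γ).pow k
    have h4 : HasDerivAt (fun a : ℝ => (1 - a - a + γ) ^ k)
        ((k:ℝ) * (1 - α - α + γ) ^ (k - 1) * (-1 - 1)) α := by
      exact ((((hasDerivAt_id α).const_sub 1).sub (hasDerivAt_id α)).add_const γ).pow k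
    have h0 : HasDerivAt (fun a : ℝ =>
        1 - a ^ k - (1 - a) ^ k - a ^ k - (1 - a) ^ k + γ ^ k + (a - γ) ^ k
          + (a - γ) ^ k + (1 - a - a + γ) ^ k)
        (0 - (k:ℝ) * α ^ (k-1) - (k:ℝ) * (1 - α) ^ (k - 1) * (-1)
          - (k:ℝ) * α ^ (k-1) - (k:ℝ) * (1 - α) ^ (k - 1) * (-1) + 0
          + (k:ℝ) * (α - γ) ^ (k - 1) * 1 + (k:ℝ) * (α - γ) ^ (k - 1) * 1
          + (k:ℝ) * (1 - α - α + γ) ^ (k - 1) * (-1 - 1)) α := by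
      exact (((((((((hasDerivAt_const α (1:ℝ)).sub h1).sub h2).sub h1).sub h2).add
        (hasDerivAt_const α (γ ^ k))).add h3).add h3).add h4)
    have hfun : (fun a : ℝ => hypP k a a γ) = (fun a : ℝ =>
        1 - a ^ k - (1 - a) ^ k - a ^ k - (1 - a) ^ k + γ ^ k + (a - γ) ^ k
          + (a - γ) ^ k + (1 - a - a + γ) ^ k) := by
      funext a; simp [hypP]
    rw [hfun]
    convert h0 using 1
    have : (1 - α - α + γ) = (1 - 2 * α + γ) := by ring
    rw [this]; ring
  -- derivative of the bracket F
  have hF : HasDerivAt (fun a : ℝ =>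
      -2 * a ^ (k - 1) + 2 * (1 - a) ^ (k - 1) - (1 - 2 * a + γ) ^ (k - 1)
        + γ ^ (k - 1))
      (2 * ((k:ℝ) - 1) * (-α ^ (k - 2) - (1 - α) ^ (k - 2)
        + (1 - 2 * α + γ) ^ (k - 2))) α := by
    have h1 := hasDerivAt_pow (k - 1) α
    have h2 : HasDerivAt (fun a : ℝ => (1 - a) ^ (k - 1))
        (((k - 1 : ℕ):ℝ) * (1 - α) ^ (k - 1 - 1) * (-1)) α :=
      ((hasDerivAt_id α).const_sub 1).pow (k - 1)
    have h3 : HasDerivAt (fun a : ℝ => (1 - 2 * a + γ) ^ (k - 1))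
        (((k - 1 : ℕ):ℝ) * (1 - 2 * α + γ) ^ (k - 1 - 1) * (-2)) α :=
      hL.pow (k - 1)
    have h0 := (((h1.const_mul (-2 : ℝ)).add (h2.const_mul (2:ℝ))).sub h3).add_const
      (γ ^ (k - 1))
    convert h0 using 1
    · rfl
    · rfl
    · rfl
    rw [show k - 1 - 1 = k - 2 from by omega, hkcast]
    ring
  -- derivative of the quotient part
  have hQ := ((hasDerivAt_const α ((k:ℝ) * r)).div hP hPne).mul hF
  have hD : HasDerivAt ψ
      ((0 + -2 / (1 - 2 * α + γ)) +
        ((0 * hypP k α α γ - (k:ℝ) * r *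
          (2 * (k:ℝ) * ((1 - α) ^ (k - 1) + (α - γ) ^ (k - 1) - α ^ (k - 1)
            - (1 - 2 * α + γ) ^ (k - 1)))) / hypP k α α γ ^ 2 *
          (-2 * α ^ (k - 1) + 2 * (1 - α) ^ (k - 1) - (1 - 2 * α + γ) ^ (k - 1)
            + γ ^ (k - 1)) +
        (k:ℝ) * r / hypP k α α γ *
          (2 * ((k:ℝ) - 1) * (-α ^ (k - 2) - (1 - α) ^ (k - 2)
            + (1 - 2 * α + γ) ^ (k - 2))))) α := by
    have hfun : ψ = fun a : ℝ => -Real.log γ + Real.log (1 - 2 * a + γ) +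
        (k : ℝ) * r / hypP k a a γ *
          (-2 * a ^ (k - 1) + 2 * (1 - a) ^ (k - 1) - (1 - 2 * a + γ) ^ (k - 1)
            + γ ^ (k - 1)) := funext hψ
    rw [hfun]
    exact ((hasDerivAt_const α (-Real.log γ)).add hlog).add hQ
  have hEq : deriv ψ α =
      -2 / (1 - 2 * α + γ) +
      2 * (k : ℝ) * ((k : ℝ) - 1) * r / hypP k α α γ *
        (-α ^ (k - 2) - (1 - α) ^ (k - 2) + (1 - 2 * α + γ) ^ (k - 2)) +
      2 * (k : ℝ) ^ 2 * r / (hypP k α α γ) ^ 2 *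
        (γ ^ (k - 1) - (1 - 2 * α + γ) ^ (k - 1) - 2 * α ^ (k - 1)
          + 2 * (1 - α) ^ (k - 1)) *
        (-(α - γ) ^ (k - 1) + α ^ (k - 1) + (1 - 2 * α + γ) ^ (k - 1)
          - (1 - α) ^ (k - 1)) := by
    rw [hD.deriv]
    field_simp
    ring
  refine ⟨hEq, ?_⟩
  rw [hEq]
  -- now prove negativity
  have hterm1 : -2 / (1 - 2 * α + γ) < 0 :=
    div_neg_of_neg_of_pos (by norm_num) hc0
  have hpow1 : (1 - 2 * α + γ) ^ (k - 2) ≤ (1 - α) ^ (k - 2) :=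
    pow_le_pow_left₀ hc0.le (by linarith) _
  have hterm2 : 2 * (k : ℝ) * ((k : ℝ) - 1) * r / hypP k α α γ *
      (-α ^ (k - 2) - (1 - α) ^ (k - 2) + (1 - 2 * α + γ) ^ (k - 2)) ≤ 0 := by
    apply mul_nonpos_of_nonneg_of_nonpos
    · apply div_nonneg _ hp.le
      have h2 : (0:ℝ) ≤ (k:ℝ) - 1 := by linarith
      exact mul_nonneg (mul_nonneg (by linarith) h2) hr.le
    · have := pow_nonneg hα0.le (k - 2)
      linarith
  -- A ≥ 0
  have hA1 : (1 - 2 * α + γ) ^ (k - 1) - γ ^ (k - 1) ≤ (1 - α) ^ (k - 1)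
      - α ^ (k - 1) := by
    apply pow_sub_pow_le_aux (k - 1) hγ0.le (by linarith) (by linarith) (by linarith)
    ring
  have hA2 : α ^ (k - 1) ≤ (1 - α) ^ (k - 1) :=
    pow_le_pow_left₀ hα0.le (by linarith) _
  have hA : 0 ≤ γ ^ (k - 1) - (1 - 2 * α + γ) ^ (k - 1) - 2 * α ^ (k - 1)
      + 2 * (1 - α) ^ (k - 1) := by linarith
  -- B ≤ 0
  have hB1 : α ^ (k - 1) - (α - γ) ^ (k - 1) ≤ (1 - α) ^ (k - 1)
      - (1 - α - γ) ^ (k - 1) := by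
    apply pow_sub_pow_le_aux (k - 1) (by linarith) (by linarith) (by linarith)
      (by linarith)
    ring
  have hB2 : (1 - 2 * α + γ) ^ (k - 1) ≤ (1 - α - γ) ^ (k - 1) :=
    pow_le_pow_left₀ hc0.le (by linarith) _
  have hB : -(α - γ) ^ (k - 1) + α ^ (k - 1) + (1 - 2 * α + γ) ^ (k - 1)
      - (1 - α) ^ (k - 1) ≤ 0 := by linarith
  have hterm3 : 2 * (k : ℝ) ^ 2 * r / (hypP k α α γ) ^ 2 *
      (γ ^ (k - 1) - (1 - 2 * α + γ) ^ (k - 1) - 2 * α ^ (k - 1)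
        + 2 * (1 - α) ^ (k - 1)) *
      (-(α - γ) ^ (k - 1) + α ^ (k - 1) + (1 - 2 * α + γ) ^ (k - 1)
        - (1 - α) ^ (k - 1)) ≤ 0 := by
    apply mul_nonpos_of_nonneg_of_nonpos _ hB
    apply mul_nonneg _ hA
    positivity
  linarith
end

section
/- Let d ≥ 2 and n ≥ 1 be integers and let z₁,…,z_d be non-negative integers with z₁ + ⋯ + z_d = n; set ζ_i = z_i/n. Then the multinomial coefficient satisfies n!/(z₁!⋯z_d!) < (7/6) √(2πn) · (∏_{i=1}^{d} ζ_i^{−ζ_i})^n, with the convention 0^0 = 1. If moreover every z_i is strictly positive and z₁ ≤ n/2, then n!/(z₁!⋯z_d!) ≤ (2πn)^{−(d−1)/2} · (∏_{i=1}^{d} ζ_i^{−1/2}) · (∏_{i=1}^{d} ζ_i^{−ζ_i})^n. -/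
open Real

lemma stirl_eq (k : ℕ) (hk : 1 ≤ k) :
    (Nat.factorial k : ℝ) = Stirling.stirlingSeq k * (Real.sqrt (2*k) * ((k:ℝ)/Real.exp 1)^k) := by
  have hk' : (0:ℝ) < k := by exact_mod_cast hk
  have h : (0:ℝ) < Real.sqrt (2*k) * ((k:ℝ)/Real.exp 1)^k := by positivity
  rw [Stirling.stirlingSeq]
  field_simp

lemma stirl_tendsto' : Filter.Tendsto (Stirling.stirlingSeq ∘ Nat.succ) Filter.atTop (nhds (Real.sqrt Real.pi)) :=
  Stirling.tendsto_stirlingSeq_sqrt_pi.comp (Filter.tendsto_add_atTop_nat 1)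

lemma sqrt_pi_le_stirl (k : ℕ) (hk : 1 ≤ k) : Real.sqrt Real.pi ≤ Stirling.stirlingSeq k := by
  have h := Stirling.stirlingSeq'_antitone.le_of_tendsto stirl_tendsto' (k-1)
  simp only [Function.comp_apply, Nat.succ_eq_add_one] at h
  rwa [Nat.sub_add_cancel hk] at h

lemma stirl_anti {a b : ℕ} (ha : 1 ≤ a) (hab : a ≤ b) :
    Stirling.stirlingSeq b ≤ Stirling.stirlingSeq a := by
  have h := Stirling.stirlingSeq'_antitone (Nat.sub_le_sub_right hab 1)
  simp only [Function.comp_apply, Nat.succ_eq_add_one] at h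
  rwa [Nat.sub_add_cancel ha, Nat.sub_add_cancel (ha.trans hab)] at h

lemma stirl_le (k : ℕ) (hk : 1 ≤ k) : Stirling.stirlingSeq k ≤ Real.exp 1 / Real.sqrt 2 := by
  rw [← Stirling.stirlingSeq_one]
  exact stirl_anti le_rfl hk

lemma const_lt : Real.exp 1 / Real.sqrt 2 < 7/6 * Real.sqrt Real.pi := by
  have h2 : (0:ℝ) < Real.sqrt 2 := by positivity
  have hp : (0:ℝ) < Real.sqrt Real.pi := Real.sqrt_pos.mpr Real.pi_pos
  have e2 : Real.sqrt 2 ^ 2 = 2 := Real.sq_sqrt (by norm_num)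
  have ep : Real.sqrt Real.pi ^ 2 = Real.pi := Real.sq_sqrt Real.pi_pos.le
  have he : Real.exp 1 < 2.7182818286 := Real.exp_one_lt_d9
  have hpi : 3.141592 < Real.pi := Real.pi_gt_d6
  rw [div_lt_iff₀ h2]
  nlinarith [Real.exp_pos 1, mul_pos h2 hp, sq_nonneg (Real.sqrt 2 * Real.sqrt Real.pi - 2.47)]

lemma fact_lb (k : ℕ) : ((k:ℝ)/Real.exp 1)^k ≤ (Nat.factorial k : ℝ) := by
  rcases Nat.eq_zero_or_pos k with rfl | hk
  · simp
  · rw [stirl_eq k hk]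
    have h1 : (1:ℝ) ≤ Real.sqrt Real.pi := by
      rw [show (1:ℝ) = Real.sqrt 1 by simp]
      exact Real.sqrt_le_sqrt (by nlinarith [Real.pi_gt_three])
    have h2 : (1:ℝ) ≤ Real.sqrt (2*k) := by
      rw [show (1:ℝ) = Real.sqrt 1 by simp]
      refine Real.sqrt_le_sqrt ?_
      have : (1:ℝ) ≤ (k:ℝ) := by exact_mod_cast hk
      linarith
    have h3 : (1:ℝ) ≤ Stirling.stirlingSeq k := le_trans h1 (sqrt_pi_le_stirl k hk)
    have h4 : (0:ℝ) ≤ ((k:ℝ)/Real.exp 1)^k := by positivity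
    nlinarith [mul_nonneg (mul_nonneg (sub_nonneg.mpr h3) (le_trans zero_le_one h2)) h4,
      mul_nonneg (sub_nonneg.mpr h2) h4]


/-- Stirling-type bounds for multinomial coefficients.  For non-negative integers
z₁,…,z_d with sum n ≥ 1 and ζ_i = z_i/n: always
n!/(z₁!⋯z_d!) < (7/6)√(2πn) (∏ ζ_i^{−ζ_i})^n  (with 0^0 = 1, satisfied by `Real.rpow`);
and if every z_i is positive and z₁ ≤ n/2 then
n!/(z₁!⋯z_d!) ≤ (2πn)^{−(d−1)/2} (∏ ζ_i^{−1/2}) (∏ ζ_i^{−ζ_i})^n. -/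
theorem multinomial_stirling_bounds (d n : ℕ) (hd : 2 ≤ d) (hn : 1 ≤ n)
    (z : Fin d → ℕ) (hz : ∑ i, z i = n) :
    (Nat.multinomial Finset.univ z : ℝ) <
      7 / 6 * Real.sqrt (2 * Real.pi * n) *
        (∏ i, ((z i : ℝ) / n) ^ (-((z i : ℝ) / n))) ^ n ∧
    ((∀ i, 0 < z i) → (z ⟨0, by omega⟩ : ℝ) ≤ (n : ℝ) / 2 →
      (Nat.multinomial Finset.univ z : ℝ) ≤
        (2 * Real.pi * n) ^ (-(((d : ℝ) - 1) / 2)) *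
          (∏ i, ((z i : ℝ) / n) ^ (-(1 / 2) : ℝ)) *
          (∏ i, ((z i : ℝ) / n) ^ (-((z i : ℝ) / n))) ^ n) := by
  have hπ := Real.pi_pos
  have hN : (0:ℝ) < (n:ℝ) := by exact_mod_cast hn
  have hzle : ∀ i, z i ≤ n := fun i =>
    hz ▸ Finset.single_le_sum (fun _ _ => Nat.zero_le _) (Finset.mem_univ i)
  have hfactprod : (0:ℝ) < ∏ i, (Nat.factorial (z i) : ℝ) :=
    Finset.prod_pos fun i _ => by positivity
  have hM : (Nat.multinomial Finset.univ z : ℝ) * ∏ i, (Nat.factorial (z i) : ℝ)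
      = (Nat.factorial n : ℝ) := by
    have h := Nat.multinomial_spec (s := Finset.univ) (f := z)
    rw [hz] at h
    rw [mul_comm, ← Nat.cast_prod, ← Nat.cast_mul, h]
  have hT : ∀ i, (((z i : ℝ)/n) ^ (-((z i:ℝ)/n)))^n = ((n:ℝ)/(z i : ℝ))^(z i) := by
    intro i
    have hx : (0:ℝ) ≤ (z i:ℝ)/n := by positivity
    rw [← Real.rpow_natCast (((z i:ℝ)/n) ^ (-((z i:ℝ)/n))) n, ← Real.rpow_mul hx]
    have he : -((z i:ℝ)/n) * n = -(z i:ℝ) := by field_simp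
    rw [he, Real.rpow_neg hx, Real.rpow_natCast, ← inv_pow, inv_div]
  have hTT : (∏ i, ((z i : ℝ)/n) ^ (-((z i:ℝ)/n)))^n = ∏ i, ((n:ℝ)/(z i : ℝ))^(z i) := by
    rw [← Finset.prod_pow]
    exact Finset.prod_congr rfl fun i _ => hT i
  have hsqrtsplit : Real.sqrt (2*Real.pi*n) = Real.sqrt Real.pi * Real.sqrt (2*n) := by
    rw [show 2*Real.pi*(n:ℝ) = Real.pi*(2*n) by ring, Real.sqrt_mul hπ.le]
  constructor
  · rw [hTT, ← mul_lt_mul_iff_left₀ hfactprod, hM]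
    have step1 : ((n:ℝ)/Real.exp 1)^n
        ≤ ∏ i, (((n:ℝ)/(z i:ℝ))^(z i) * (Nat.factorial (z i) : ℝ)) := by
      have hsum : ∏ i, ((n:ℝ)/Real.exp 1)^(z i) = ((n:ℝ)/Real.exp 1)^n := by
        rw [Finset.prod_pow_eq_pow_sum, hz]
      rw [← hsum]
      refine Finset.prod_le_prod (fun i _ => by positivity) (fun i _ => ?_)
      rcases Nat.eq_zero_or_pos (z i) with h0 | hpos
      · simp [h0]
      · have hne : ((z i):ℝ) ≠ 0 := by positivity
        have hmul : ((n:ℝ)/(z i:ℝ)) * ((z i:ℝ)/Real.exp 1) = (n:ℝ)/Real.exp 1 := by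
          field_simp
        calc ((n:ℝ)/Real.exp 1)^(z i)
            = ((n:ℝ)/(z i:ℝ))^(z i) * ((z i:ℝ)/Real.exp 1)^(z i) := by
              rw [← mul_pow, hmul]
          _ ≤ ((n:ℝ)/(z i:ℝ))^(z i) * (Nat.factorial (z i) : ℝ) :=
              mul_le_mul_of_nonneg_left (fact_lb (z i)) (by positivity)
    calc (Nat.factorial n : ℝ)
        = Stirling.stirlingSeq n * (Real.sqrt (2*n) * ((n:ℝ)/Real.exp 1)^n) := stirl_eq n hn
      _ ≤ (Real.exp 1 / Real.sqrt 2) * (Real.sqrt (2*n) * ((n:ℝ)/Real.exp 1)^n) :=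
          mul_le_mul_of_nonneg_right (stirl_le n hn) (by positivity)
      _ < (7/6 * Real.sqrt Real.pi) * (Real.sqrt (2*n) * ((n:ℝ)/Real.exp 1)^n) :=
          mul_lt_mul_of_pos_right const_lt (by positivity)
      _ = 7/6 * Real.sqrt (2*Real.pi*n) * ((n:ℝ)/Real.exp 1)^n := by
          rw [hsqrtsplit]; ring
      _ ≤ 7/6 * Real.sqrt (2*Real.pi*n) *
            ∏ i, (((n:ℝ)/(z i:ℝ))^(z i) * (Nat.factorial (z i) : ℝ)) :=
          mul_le_mul_of_nonneg_left step1 (by positivity)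
      _ = 7/6 * Real.sqrt (2*Real.pi*n) * (∏ i, ((n:ℝ)/(z i:ℝ))^(z i)) *
            ∏ i, (Nat.factorial (z i) : ℝ) := by
          rw [Finset.prod_mul_distrib]; ring
  · intro hpos _
    have hz1 : ∀ i, 1 ≤ z i := hpos
    have h2πN : (0:ℝ) < 2*Real.pi*(n:ℝ) := by positivity
    have hsp : (0:ℝ) < Real.sqrt Real.pi := Real.sqrt_pos.mpr hπ
    rw [hTT, ← mul_le_mul_iff_left₀ hfactprod, hM]
    -- rewrite C
    have hC : (2*Real.pi*(n:ℝ)) ^ (-(((d:ℝ)-1)/2))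
        = Real.sqrt (2*Real.pi*n) * ∏ _i : Fin d, (2*Real.pi*(n:ℝ))^(-(1/2) : ℝ) := by
      rw [Finset.prod_const, Finset.card_univ, Fintype.card_fin,
        ← Real.rpow_natCast ((2*Real.pi*(n:ℝ))^(-(1/2) : ℝ)) d, ← Real.rpow_mul h2πN.le,
        Real.sqrt_eq_rpow, ← Real.rpow_add h2πN]
      congr 1
      ring
    have hfac2 : ∀ i : Fin d,
        (2*Real.pi*(n:ℝ))^(-(1/2) : ℝ) * (((z i:ℝ)/n) ^ (-(1/2) : ℝ)) *
          ((n:ℝ)/(z i:ℝ))^(z i) * (Nat.factorial (z i) : ℝ)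
        = (Stirling.stirlingSeq (z i) / Real.sqrt Real.pi) * ((n:ℝ)/Real.exp 1)^(z i) := by
      intro i
      have hK : (0:ℝ) < (z i : ℝ) := by exact_mod_cast hpos i
      have hx : (0:ℝ) ≤ (z i:ℝ)/n := by positivity
      have ha : (2*Real.pi*(n:ℝ))^(-(1/2) : ℝ) * (((z i:ℝ)/n) ^ (-(1/2) : ℝ))
          = (Real.sqrt Real.pi * Real.sqrt (2*(z i:ℝ)))⁻¹ := by
        rw [← Real.mul_rpow h2πN.le hx,
          show (2*Real.pi*(n:ℝ)) * ((z i:ℝ)/n) = Real.pi * (2*(z i:ℝ)) by field_simp,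
          Real.rpow_neg (by positivity), ← Real.sqrt_eq_rpow,
          Real.sqrt_mul hπ.le]
      have hs2 : Real.sqrt (2*(z i:ℝ)) ≠ 0 := by positivity
      have hmul : ((n:ℝ)/(z i:ℝ))^(z i) * ((z i:ℝ)/Real.exp 1)^(z i)
          = ((n:ℝ)/Real.exp 1)^(z i) := by
        rw [← mul_pow]
        congr 1
        field_simp
      rw [ha, stirl_eq (z i) (hz1 i)]
      calc (Real.sqrt Real.pi * Real.sqrt (2*(z i:ℝ)))⁻¹ * ((n:ℝ)/(z i:ℝ))^(z i) *
            (Stirling.stirlingSeq (z i) * (Real.sqrt (2*(z i:ℝ)) * ((z i:ℝ)/Real.exp 1)^(z i)))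
          = (Stirling.stirlingSeq (z i) / Real.sqrt Real.pi) *
              ((Real.sqrt (2*(z i:ℝ)))⁻¹ * Real.sqrt (2*(z i:ℝ))) *
              (((n:ℝ)/(z i:ℝ))^(z i) * ((z i:ℝ)/Real.exp 1)^(z i)) := by
            rw [mul_inv]; ring
        _ = (Stirling.stirlingSeq (z i) / Real.sqrt Real.pi) * ((n:ℝ)/Real.exp 1)^(z i) := by
            rw [inv_mul_cancel₀ hs2, hmul, mul_one]
    have hbig : (2*Real.pi*(n:ℝ)) ^ (-(((d:ℝ)-1)/2)) *
          (∏ i, ((z i:ℝ)/n) ^ (-(1/2) : ℝ)) * (∏ i, ((n:ℝ)/(z i:ℝ))^(z i)) *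
          ∏ i, (Nat.factorial (z i) : ℝ)
        = Real.sqrt (2*Real.pi*n) *
            ∏ i, ((Stirling.stirlingSeq (z i) / Real.sqrt Real.pi) * ((n:ℝ)/Real.exp 1)^(z i)) := by
      rw [hC]
      rw [show (Real.sqrt (2*Real.pi*n) * ∏ _i : Fin d, (2*Real.pi*(n:ℝ))^(-(1/2) : ℝ)) *
          (∏ i, ((z i:ℝ)/n) ^ (-(1/2) : ℝ)) * (∏ i, ((n:ℝ)/(z i:ℝ))^(z i)) *
          (∏ i, (Nat.factorial (z i) : ℝ))
        = Real.sqrt (2*Real.pi*n) *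
          (((∏ _i : Fin d, (2*Real.pi*(n:ℝ))^(-(1/2) : ℝ)) *
            (∏ i, ((z i:ℝ)/n) ^ (-(1/2) : ℝ)) * (∏ i, ((n:ℝ)/(z i:ℝ))^(z i))) *
            (∏ i, (Nat.factorial (z i) : ℝ))) by ring]
      rw [← Finset.prod_mul_distrib, ← Finset.prod_mul_distrib, ← Finset.prod_mul_distrib]
      congr 1
      exact Finset.prod_congr rfl fun i _ => hfac2 i
    rw [hbig, Finset.prod_mul_distrib, Finset.prod_pow_eq_pow_sum, hz]
    -- goal: n! ≤ √(2πn) * ((∏ u i) * (n/e)^n)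
    have hu : ∀ i ∈ Finset.univ, (1:ℝ) ≤ Stirling.stirlingSeq (z i) / Real.sqrt Real.pi :=
      fun i _ => (one_le_div hsp).mpr (sqrt_pi_le_stirl (z i) (hz1 i))
    have i0 : Fin d := ⟨0, by omega⟩
    have hle : Stirling.stirlingSeq n / Real.sqrt Real.pi
        ≤ ∏ i, (Stirling.stirlingSeq (z i) / Real.sqrt Real.pi) := by
      have hsn0 : (0:ℝ) ≤ Stirling.stirlingSeq n / Real.sqrt Real.pi := by
        have h := sqrt_pi_le_stirl n hn
        have : (0:ℝ) ≤ Stirling.stirlingSeq n := le_trans hsp.le h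
        positivity
      have h1 : ∏ i, (if i = i0 then Stirling.stirlingSeq n / Real.sqrt Real.pi else 1)
          = Stirling.stirlingSeq n / Real.sqrt Real.pi := by
        rw [Finset.prod_ite_eq']
        simp
      rw [← h1]
      refine Finset.prod_le_prod (fun i _ => by split <;> [exact hsn0; norm_num]) (fun i _ => ?_)
      by_cases h : i = i0
      · subst h
        simpa using (div_le_div_iff_of_pos_right hsp).mpr (stirl_anti (hz1 i) (hzle i))
      · simpa [h] using hu i (Finset.mem_univ i)
    have hsn : Stirling.stirlingSeq n
        ≤ Real.sqrt Real.pi * ∏ i, (Stirling.stirlingSeq (z i) / Real.sqrt Real.pi) := by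
      calc Stirling.stirlingSeq n
          = Real.sqrt Real.pi * (Stirling.stirlingSeq n / Real.sqrt Real.pi) := by
            field_simp
        _ ≤ Real.sqrt Real.pi * ∏ i, (Stirling.stirlingSeq (z i) / Real.sqrt Real.pi) :=
            mul_le_mul_of_nonneg_left hle hsp.le
    calc (Nat.factorial n : ℝ)
        = Stirling.stirlingSeq n * (Real.sqrt (2*n) * ((n:ℝ)/Real.exp 1)^n) := stirl_eq n hn
      _ ≤ (Real.sqrt Real.pi * ∏ i, (Stirling.stirlingSeq (z i) / Real.sqrt Real.pi)) *
            (Real.sqrt (2*n) * ((n:ℝ)/Real.exp 1)^n) :=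
          mul_le_mul_of_nonneg_right hsn (by positivity)
      _ = Real.sqrt (2*Real.pi*n) *
            ((∏ i, (Stirling.stirlingSeq (z i) / Real.sqrt Real.pi)) * ((n:ℝ)/Real.exp 1)^n) := by
          rw [hsqrtsplit]; ring
end
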